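/- arXiv:1809.00742 — 3 statements merged into one kernel-verified Lean document; each statement's English description precedes it below -/
import Mathlib

section
/- Let p≥2 and P={312, 2431, δ} where δ is the length-(p+1) decreasing permutation (p+1)p...21. For α∈S_n(P), define d(α)=1 if the entry n plays the role of the largest value in an occurrence of the pattern 231 in α AND the last p entries of α are not in decreasing order; otherwise d(α)=0 (in particular d of the empty permutation is 0). Then for every α∈S_n(P), site 1 of α is active; and if α∈S_n(P) has exactly k active sites and 1≤i≤k, then: (a) the number of active sites of α^{↓i} equals i+1 if i=1 or (i=k and d(α)=0 and k<p), and equals i otherwise; (b) d(α^{↓i})=0 if i=1 or (i=k and d(α)=0), and d(α^{↓i})=1 otherwise. Hence P is a colored regular set of forbidden patterns with color function d and set of colors {0,1}. -/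
open Equiv

/-- The pattern `σ` (a length-`k` permutation) is contained in the length-`n`
permutation `π` : some subsequence of `π` is order isomorphic to `σ`. -/
def Contains {k n : ℕ} (σ : Equiv.Perm (Fin k)) (π : Equiv.Perm (Fin n)) : Prop :=
  ∃ f : Fin k → Fin n, StrictMono f ∧ ∀ a b : Fin k, σ a < σ b ↔ π (f a) < π (f b)

/-- A set of forbidden patterns, of possibly different lengths. -/
abbrev PatternSet : Type := Set ((k : ℕ) × Equiv.Perm (Fin k))

/-- `π` avoids every pattern of `P`, i.e. `π ∈ S_n(P)`. -/
def AvoidsSet {n : ℕ} (π : Equiv.Perm (Fin n)) (P : PatternSet) : Prop :=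
  ∀ τ ∈ P, ¬ Contains τ.2 π

/-- The (0-indexed) position of the largest entry of `α`. -/
def maxPos {n : ℕ} (α : Equiv.Perm (Fin (n + 1))) : Fin (n + 1) := α⁻¹ (Fin.last n)

/-- `α^→` : transpose the largest entry with the entry immediately to its right
(meaningful when `maxPos α ≠ Fin.last n`, i.e. the largest entry is not last). -/
def moveRight {n : ℕ} (α : Equiv.Perm (Fin (n + 1))) : Equiv.Perm (Fin (n + 1)) :=
  α * Equiv.swap (maxPos α) (maxPos α + 1)

/-- `α^←` : transpose the largest entry with the entry immediately to its left
(meaningful when `maxPos α ≠ 0`, i.e. the largest entry is not first). -/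
def moveLeft {n : ℕ} (α : Equiv.Perm (Fin (n + 1))) : Equiv.Perm (Fin (n + 1)) :=
  α * Equiv.swap (maxPos α) (maxPos α - 1)

/-- `P` is right-justified : moving the largest entry of a `P`-avoiding permutation one
position to the right again yields a `P`-avoiding permutation. -/
def RightJustified (P : PatternSet) : Prop :=
  ∀ (n : ℕ) (α : Equiv.Perm (Fin (n + 1))),
    AvoidsSet α P → maxPos α ≠ Fin.last n → AvoidsSet (moveRight α) P

/-- `α^{↓i}` : insert the new largest entry into site `i` of `α`; the `n+1` sites of a
length-`n` permutation are numbered `1, …, n+1` from right to left, so the new largest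
entry lands at 0-indexed position `n - (i - 1)`. -/
def insertMax {n : ℕ} (α : Equiv.Perm (Fin n)) (i : ℕ) : Equiv.Perm (Fin (n + 1)) :=
  (finSuccEquivLast.permCongr.symm α.optionCongr) *
    (Fin.revPerm * Fin.cycleRange (Fin.rev (⟨n - (i - 1), by omega⟩ : Fin (n + 1))) *
      Fin.revPerm)

/-- Site `i` of `α ∈ S_n(P)` is active (with respect to `P`). -/
def ActiveSite {n : ℕ} (P : PatternSet) (α : Equiv.Perm (Fin n)) (i : ℕ) : Prop :=
  1 ≤ i ∧ i ≤ n + 1 ∧ AvoidsSet (insertMax α i) P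

/-- The number of active sites of `α` with respect to `P`. -/
noncomputable def numActive {n : ℕ} (P : PatternSet) (α : Equiv.Perm (Fin n)) : ℕ :=
  Set.ncard {i : ℕ | ActiveSite P α i}

/-- Delete the largest entry of a length-`(n+1)` permutation. -/
def deleteMax {n : ℕ} (π : Equiv.Perm (Fin (n + 1))) : Equiv.Perm (Fin n) :=
  Equiv.removeNone (finSuccEquivLast.permCongr
    (π * (Fin.revPerm * Fin.cycleRange (Fin.rev (maxPos π)) * Fin.revPerm)⁻¹))

/-- The pattern `321`. -/
def perm321 : Equiv.Perm (Fin 3) := ⟨![2, 1, 0], ![2, 1, 0], by decide, by decide⟩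
/-- The pattern `312`. -/
def perm312 : Equiv.Perm (Fin 3) := ⟨![2, 0, 1], ![1, 2, 0], by decide, by decide⟩
/-- The pattern `231`. -/
def perm231 : Equiv.Perm (Fin 3) := ⟨![1, 2, 0], ![2, 0, 1], by decide, by decide⟩
/-- The pattern `2431`. -/
def perm2431 : Equiv.Perm (Fin 4) := ⟨![1, 3, 2, 0], ![3, 0, 2, 1], by decide, by decide⟩
/-- The pattern `4321`. -/
def perm4321 : Equiv.Perm (Fin 4) := ⟨![3, 2, 1, 0], ![3, 2, 1, 0], by decide, by decide⟩

/-- The pattern `(m+1) 1 2 … m` of length `m + 1`. -/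
def sigmaM (m : ℕ) : Equiv.Perm (Fin (m + 1)) := (finRotate (m + 1))⁻¹

/-- The pattern `p (p+1) 1 2 … (p-1)` of length `p + 1`. -/
def sigmaP (p : ℕ) : Equiv.Perm (Fin (p + 1)) := ((finRotate (p + 1))⁻¹) ^ 2

/-- The largest entry of `α` plays the role of `3` in an occurrence of the pattern
`231` : there are positions `a < b < c` with `α b` largest, `α a < α b` and `α c < α a`. -/
def MaxIn231 {n : ℕ} (α : Equiv.Perm (Fin n)) : Prop :=
  ∃ a b c : Fin n, a < b ∧ b < c ∧ (∀ x, α x ≤ α b) ∧ α a < α b ∧ α c < α a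

/-- The last `p` entries of `α` are in decreasing order. -/
def LastDecreasing {n : ℕ} (α : Equiv.Perm (Fin n)) (p : ℕ) : Prop :=
  ∀ a b : Fin n, n - p ≤ (a : ℕ) → a < b → α b < α a

open Classical in
/-- The color `d(α)` : it is `1` iff the largest entry of `α` plays the role of `3` in an
occurrence of `231` and the length-`p` suffix of `α` is not decreasing; otherwise `0`. -/
noncomputable def colorD {n : ℕ} (p : ℕ) (α : Equiv.Perm (Fin n)) : ℕ :=
  if MaxIn231 α ∧ ¬ LastDecreasing α p then 1 else 0

open Classical in
/-- The color used for `P = {312, 2431}` : it is `1` iff the largest entry of `α` plays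
the role of `3` in an occurrence of `231`; otherwise `0`. -/
noncomputable def colorD2 {n : ℕ} (α : Equiv.Perm (Fin n)) : ℕ :=
  if MaxIn231 α then 1 else 0


/-! ### Auxiliary machinery -/

section Aux
open Equiv

lemma aux_A {n : ℕ} (α : Equiv.Perm (Fin n)) (x : Fin n) :
    (finSuccEquivLast.permCongr.symm α.optionCongr) x.castSucc = (α x).castSucc := by
  simp [Equiv.permCongr_symm, Equiv.permCongr_apply]

lemma aux_A_last {n : ℕ} (α : Equiv.Perm (Fin n)) :
    (finSuccEquivLast.permCongr.symm α.optionCongr) (Fin.last n) = Fin.last n := by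
  simp [Equiv.permCongr_symm, Equiv.permCongr_apply]

lemma insertMax_val {n : ℕ} (α : Equiv.Perm (Fin n)) (i : ℕ) (hi1 : 1 ≤ i)
    (j : Fin (n + 1)) :
    ((insertMax α i j : Fin (n+1)) : ℕ) =
      if h : (j : ℕ) < n + 1 - i then (α ⟨j, by omega⟩ : ℕ)
      else if h' : (j : ℕ) = n + 1 - i then n
      else (α ⟨(j : ℕ) - 1, by omega⟩ : ℕ) := by
  have hpos : n - (i - 1) = n + 1 - i := by omega
  unfold insertMax
  simp only [Equiv.Perm.mul_apply, Fin.revPerm_apply]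
  set c : Fin (n+1) := (⟨n - (i - 1), by omega⟩ : Fin (n + 1)).rev with hc
  have hcval : (c : ℕ) = n - (n + 1 - i) := by
    rw [hc, Fin.val_rev]; simp; omega
  rcases lt_trichotomy ((j:ℕ)) (n + 1 - i) with hlt | heq | hgt
  · have h1 : c < j.rev := by
      rw [Fin.lt_iff_val_lt_val, hcval, Fin.val_rev]; omega
    rw [Fin.cycleRange_of_gt h1, Fin.rev_rev]
    have hj : j = (⟨(j:ℕ), by omega⟩ : Fin n).castSucc := by ext; simp
    rw [dif_pos hlt]
    conv_lhs => rw [hj]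
    rw [aux_A]
    simp
  · have h1 : j.rev = c := by
      rw [Fin.ext_iff, hcval, Fin.val_rev]; omega
    rw [Fin.cycleRange_of_eq h1]
    have h0 : (0 : Fin (n+1)).rev = Fin.last n := by
      rw [Fin.ext_iff, Fin.val_rev]; simp
    rw [h0, aux_A_last]
    rw [dif_neg (by omega), dif_pos heq]
    simp [Fin.last]
  · have h1 : j.rev < c := by
      rw [Fin.lt_iff_val_lt_val, hcval, Fin.val_rev]; omega
    rw [Fin.cycleRange_of_lt h1]
    have h2 : (j.rev + 1).rev = (⟨(j:ℕ) - 1, by omega⟩ : Fin n).castSucc := by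
      rw [Fin.ext_iff, Fin.val_rev, Fin.val_add_one]
      have : j.rev ≠ Fin.last n := by
        rw [Ne, Fin.ext_iff, Fin.val_rev]; simp; omega
      rw [if_neg this, Fin.val_rev]; simp; omega
    rw [h2, aux_A, dif_neg (by omega), dif_neg (by omega)]
    simp

lemma insVal_pre {n : ℕ} (α : Equiv.Perm (Fin n)) (i : ℕ) (hi1 : 1 ≤ i)
    {j : Fin (n + 1)} {a : Fin n} (hj : (j : ℕ) = (a : ℕ)) (h : (a : ℕ) < n + 1 - i) :
    ((insertMax α i j : Fin (n+1)) : ℕ) = α a := by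
  rw [insertMax_val α i hi1, dif_pos (by omega)]
  congr 1; ext; simp [hj]

lemma insVal_mid {n : ℕ} (α : Equiv.Perm (Fin n)) (i : ℕ) (hi1 : 1 ≤ i)
    {j : Fin (n + 1)} (hj : (j : ℕ) = n + 1 - i) :
    ((insertMax α i j : Fin (n+1)) : ℕ) = n := by
  rw [insertMax_val α i hi1, dif_neg (by omega), dif_pos hj]

lemma insVal_suf {n : ℕ} (α : Equiv.Perm (Fin n)) (i : ℕ) (hi1 : 1 ≤ i)
    {j : Fin (n + 1)} {a : Fin n} (hj : (j : ℕ) = (a : ℕ) + 1) (h : n + 1 - i ≤ (a : ℕ)) :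
    ((insertMax α i j : Fin (n+1)) : ℕ) = α a := by
  rw [insertMax_val α i hi1, dif_neg (by omega), dif_neg (by omega)]
  congr 1; ext; simp [hj]

lemma contains312_iff {m : ℕ} (β : Equiv.Perm (Fin m)) :
    Contains perm312 β ↔ ∃ x y z : Fin m, x < y ∧ y < z ∧ β y < β z ∧ β z < β x := by
  constructor
  · rintro ⟨f, hf, hiff⟩
    exact ⟨f 0, f 1, f 2, hf (by decide), hf (by decide),
      (hiff 1 2).1 (by decide), (hiff 2 0).1 (by decide)⟩
  · rintro ⟨x, y, z, hxy, hyz, h1, h2⟩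
    refine ⟨![x, y, z], ?_, ?_⟩
    · intro a b hab
      fin_cases a <;> fin_cases b <;> simp_all <;> omega
    · intro a b
      fin_cases a <;> fin_cases b <;> simp <;>
        first
        | exact iff_of_true (by decide) (by omega)
        | exact iff_of_false (by decide) (by omega)

lemma contains2431_iff {m : ℕ} (β : Equiv.Perm (Fin m)) :
    Contains perm2431 β ↔ ∃ x y z w : Fin m, x < y ∧ y < z ∧ z < w ∧
      β w < β x ∧ β x < β z ∧ β z < β y := by
  constructor
  · rintro ⟨f, hf, hiff⟩
    exact ⟨f 0, f 1, f 2, f 3, hf (by decide), hf (by decide), hf (by decide),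
      (hiff 3 0).1 (by decide), (hiff 0 2).1 (by decide), (hiff 2 1).1 (by decide)⟩
  · rintro ⟨x, y, z, w, hxy, hyz, hzw, h1, h2, h3⟩
    refine ⟨![x, y, z, w], ?_, ?_⟩
    · intro a b hab
      fin_cases a <;> fin_cases b <;> simp_all <;> omega
    · intro a b
      fin_cases a <;> fin_cases b <;> simp <;>
        first
        | exact iff_of_true (by decide) (by omega)
        | exact iff_of_false (by decide) (by omega)

lemma containsRev_iff {q m : ℕ} (β : Equiv.Perm (Fin m)) :
    Contains (Fin.revPerm : Equiv.Perm (Fin q)) β ↔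
      ∃ f : Fin q → Fin m, StrictMono f ∧ ∀ a b : Fin q, a < b → β (f b) < β (f a) := by
  constructor
  · rintro ⟨f, hf, hiff⟩
    refine ⟨f, hf, fun a b hab => ?_⟩
    exact (hiff b a).1 (by simpa [Fin.rev_lt_rev] using hab)
  · rintro ⟨f, hf, h⟩
    refine ⟨f, hf, fun a b => ?_⟩
    simp only [Fin.revPerm_apply, Fin.rev_lt_rev]
    constructor
    · exact fun hba => h b a hba
    · intro hβ
      rcases lt_trichotomy a b with hc | hc | hc
      · exact absurd (h a b hc) (lt_asymm hβ)
      · subst hc; exact absurd hβ (lt_irrefl _)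
      · exact hc

lemma avoids_iff (p : ℕ) {m : ℕ} (β : Equiv.Perm (Fin m)) :
    AvoidsSet β ({⟨3, perm312⟩, ⟨4, perm2431⟩,
        ⟨p + 1, (Fin.revPerm : Equiv.Perm (Fin (p + 1)))⟩} : PatternSet) ↔
      ¬ Contains perm312 β ∧ ¬ Contains perm2431 β ∧
        ¬ Contains (Fin.revPerm : Equiv.Perm (Fin (p + 1))) β := by
  constructor
  · intro h
    exact ⟨h ⟨3, perm312⟩ (by simp), h ⟨4, perm2431⟩ (by simp),
      h ⟨p + 1, Fin.revPerm⟩ (by simp)⟩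
  · rintro ⟨h1, h2, h3⟩ τ hτ
    simp only [Set.mem_insert_iff, Set.mem_singleton_iff] at hτ
    rcases hτ with rfl | rfl | rfl
    · exact h1
    · exact h2
    · exact h3

/-- The combinatorial characterization of site `i` of `α` being active. -/
def SiteCond (p : ℕ) {n : ℕ} (i : ℕ) (α : Equiv.Perm (Fin n)) : Prop :=
  (∀ a b : Fin n, n + 1 - i ≤ (a:ℕ) → a < b → α b < α a) ∧ i ≤ p ∧
  ¬ ∃ x y z : Fin n, (x:ℕ) < n + 1 - i ∧ n + 1 - i ≤ (y:ℕ) ∧ y < z ∧ α z < α x ∧ α x < α y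

lemma siteCond_one (p : ℕ) (hp : 1 ≤ p) {n : ℕ} (α : Equiv.Perm (Fin n)) :
    SiteCond p 1 α := by
  refine ⟨fun a b ha hab => absurd hab (by omega), hp, ?_⟩
  rintro ⟨x, y, z, hx, hy, hyz, -⟩
  omega

lemma siteCond_mono (p : ℕ) {n : ℕ} {i j : ℕ} (α : Equiv.Perm (Fin n))
    (h : SiteCond p i α) (hj1 : 1 ≤ j) (hji : j ≤ i) : SiteCond p j α := by
  obtain ⟨h1, h2, h3⟩ := h
  refine ⟨fun a b ha hab => h1 a b (by omega) hab, by omega, ?_⟩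
  rintro ⟨x, y, z, hx, hy, hyz, hzx, hxy⟩
  by_cases hx' : (x:ℕ) < n + 1 - i
  · exact h3 ⟨x, y, z, hx', by omega, hyz, hzx, hxy⟩
  · exact absurd (h1 x y (by omega) (by omega)) (by omega)

end Aux
section InsertAvoids
open Equiv

/-- Projection of a position of `insertMax α i` other than the new-max position
back to a position of `α`. -/
def projIdx {n : ℕ} (i : ℕ) (j : Fin (n + 1)) (h : (j : ℕ) ≠ n + 1 - i) (hi1 : 1 ≤ i) :
    Fin n :=
  if h' : (j : ℕ) < n + 1 - i then ⟨j, by omega⟩ else ⟨(j : ℕ) - 1, by omega⟩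

lemma projIdx_val {n : ℕ} (α : Equiv.Perm (Fin n)) (i : ℕ) (j : Fin (n + 1))
    (h : (j : ℕ) ≠ n + 1 - i) (hi1 : 1 ≤ i) :
    ((insertMax α i j : Fin (n+1)) : ℕ) = α (projIdx i j h hi1) := by
  unfold projIdx
  by_cases h' : (j : ℕ) < n + 1 - i
  · rw [dif_pos h', insVal_pre α i hi1 (a := ⟨(j : ℕ), by omega⟩) rfl h']
  · rw [dif_neg h', insVal_suf α i hi1 (a := ⟨(j : ℕ) - 1, by omega⟩) (by simp; omega) (by simp; omega)]

lemma projIdx_mono {n : ℕ} (i : ℕ) {j1 j2 : Fin (n + 1)}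
    (h1 : (j1 : ℕ) ≠ n + 1 - i) (h2 : (j2 : ℕ) ≠ n + 1 - i) (hi1 : 1 ≤ i)
    (hlt : j1 < j2) : projIdx i j1 h1 hi1 < projIdx i j2 h2 hi1 := by
  unfold projIdx
  rw [Fin.lt_iff_val_lt_val] at hlt
  by_cases ha : (j1 : ℕ) < n + 1 - i <;> by_cases hb : (j2 : ℕ) < n + 1 - i
  · rw [dif_pos ha, dif_pos hb, Fin.mk_lt_mk]; omega
  · rw [dif_pos ha, dif_neg hb, Fin.mk_lt_mk]; omega
  · rw [dif_neg ha, dif_pos hb, Fin.mk_lt_mk]; omega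
  · rw [dif_neg ha, dif_neg hb, Fin.mk_lt_mk]; omega

/-- Deleting the inserted maximum from an occurrence that does not use it. -/
lemma contains_of_insert_no_max {q n : ℕ} (σ : Equiv.Perm (Fin q)) (α : Equiv.Perm (Fin n))
    (i : ℕ) (hi1 : 1 ≤ i) (f : Fin q → Fin (n + 1)) (hf : StrictMono f)
    (hne : ∀ a, ((f a : Fin (n+1)) : ℕ) ≠ n + 1 - i)
    (hiff : ∀ a b : Fin q, σ a < σ b ↔ insertMax α i (f a) < insertMax α i (f b)) :
    Contains σ α := by
  refine ⟨fun a => projIdx i (f a) (hne a) hi1, fun a b hab => projIdx_mono i _ _ hi1 (hf hab), ?_⟩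
  intro a b
  show σ a < σ b ↔ α (projIdx i (f a) (hne a) hi1) < α (projIdx i (f b) (hne b) hi1)
  rw [hiff a b]
  have va := projIdx_val α i (f a) (hne a) hi1
  have vb := projIdx_val α i (f b) (hne b) hi1
  constructor <;> (intro h; rw [Fin.lt_iff_val_lt_val] at h ⊢; omega)

lemma insert_avoids_iff (p : ℕ) (hp : 1 ≤ p) {n : ℕ} (α : Equiv.Perm (Fin n))
    (hα : AvoidsSet α ({⟨3, perm312⟩, ⟨4, perm2431⟩,
        ⟨p + 1, (Fin.revPerm : Equiv.Perm (Fin (p + 1)))⟩} : PatternSet))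
    (i : ℕ) (hi1 : 1 ≤ i) (hi2 : i ≤ n + 1) :
    AvoidsSet (insertMax α i) ({⟨3, perm312⟩, ⟨4, perm2431⟩,
        ⟨p + 1, (Fin.revPerm : Equiv.Perm (Fin (p + 1)))⟩} : PatternSet) ↔
      SiteCond p i α := by
  rw [avoids_iff] at hα ⊢
  obtain ⟨ha1, ha2, ha3⟩ := hα
  constructor
  · rintro ⟨hb1, hb2, hb3⟩
    have hC1 : ∀ a b : Fin n, n + 1 - i ≤ (a:ℕ) → a < b → α b < α a := by
      intro a b ha hab
      by_contra hcon
      have hne : ((α a : Fin n) : ℕ) ≠ ((α b : Fin n) : ℕ) := by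
        simp only [ne_eq, Fin.val_eq_val, EmbeddingLike.apply_eq_iff_eq]
        exact (ne_of_lt hab)
      rw [Fin.lt_iff_val_lt_val] at hcon
      apply hb1
      rw [contains312_iff]
      have vx := insVal_mid α i hi1 (j := ⟨n + 1 - i, by omega⟩) rfl
      have vy := insVal_suf α i hi1 (j := ⟨(a:ℕ)+1, by omega⟩) (a := a) rfl ha
      have vz := insVal_suf α i hi1 (j := ⟨(b:ℕ)+1, by omega⟩) (a := b) rfl (by omega)
      refine ⟨⟨n + 1 - i, by omega⟩, ⟨(a:ℕ)+1, by omega⟩, ⟨(b:ℕ)+1, by omega⟩,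
        Fin.mk_lt_mk.mpr (by omega), Fin.mk_lt_mk.mpr (by omega), ?_, ?_⟩
      · rw [Fin.lt_iff_val_lt_val]; omega
      · rw [Fin.lt_iff_val_lt_val]; omega
    have hC2 : i ≤ p := by
      by_contra hcon
      push_neg at hcon
      apply hb3
      rw [containsRev_iff]
      refine ⟨fun a => ⟨n + 1 - i + (a:ℕ), by omega⟩, ?_, ?_⟩
      · intro a b hab
        beta_reduce
        rw [Fin.mk_lt_mk]
        have := Fin.lt_iff_val_lt_val.mp hab
        omega
      · intro a b hab
        beta_reduce
        rw [Fin.lt_iff_val_lt_val] at hab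
        have vb := insVal_suf α i hi1 (j := ⟨n + 1 - i + (b:ℕ), by omega⟩)
          (a := ⟨n + 1 - i + (b:ℕ) - 1, by omega⟩) (by simp; omega) (by simp; omega)
        by_cases ha0 : (a:ℕ) = 0
        · have va := insVal_mid α i hi1 (j := ⟨n + 1 - i + (a:ℕ), by omega⟩) (by show n + 1 - i + (a:ℕ) = n + 1 - i; omega)
          rw [Fin.lt_iff_val_lt_val]
          omega
        · have va := insVal_suf α i hi1 (j := ⟨n + 1 - i + (a:ℕ), by omega⟩)
            (a := ⟨n + 1 - i + (a:ℕ) - 1, by omega⟩) (by simp; omega) (by simp; omega)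
          have hd := hC1 ⟨n + 1 - i + (a:ℕ) - 1, by omega⟩ ⟨n + 1 - i + (b:ℕ) - 1, by omega⟩
            (by simp; omega) (Fin.mk_lt_mk.mpr (by omega))
          rw [Fin.lt_iff_val_lt_val]
          omega
    refine ⟨hC1, hC2, ?_⟩
    rintro ⟨x, y, z, hx, hy, hyz, hzx, hxy⟩
    rw [Fin.lt_iff_val_lt_val] at hyz
    apply hb2
    rw [contains2431_iff]
    have v1 := insVal_pre α i hi1 (j := ⟨(x:ℕ), by omega⟩) (a := x) rfl hx
    have v2 := insVal_mid α i hi1 (j := ⟨n + 1 - i, by omega⟩) rfl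
    have v3 := insVal_suf α i hi1 (j := ⟨(y:ℕ)+1, by omega⟩) (a := y) rfl hy
    have v4 := insVal_suf α i hi1 (j := ⟨(z:ℕ)+1, by omega⟩) (a := z) rfl (by omega)
    refine ⟨⟨(x:ℕ), by omega⟩, ⟨n + 1 - i, by omega⟩, ⟨(y:ℕ)+1, by omega⟩, ⟨(z:ℕ)+1, by omega⟩,
      Fin.mk_lt_mk.mpr (by omega), Fin.mk_lt_mk.mpr (by omega), Fin.mk_lt_mk.mpr (by omega),
      ?_, ?_, ?_⟩ <;> (rw [Fin.lt_iff_val_lt_val]; omega)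
  · rintro ⟨hC1, hC2, hC3⟩
    refine ⟨?_, ?_, ?_⟩
    · -- no 312
      intro hcon
      rw [contains312_iff] at hcon
      obtain ⟨x, y, z, hxy, hyz, h1, h2⟩ := hcon
      have hxy' := Fin.lt_iff_val_lt_val.mp hxy
      have hyz' := Fin.lt_iff_val_lt_val.mp hyz
      by_cases hz : (z:ℕ) = n + 1 - i
      · have vz := insVal_mid α i hi1 hz
        have vx := projIdx_val α i x (by omega) hi1
        rw [Fin.lt_iff_val_lt_val] at h2
        have := (α (projIdx i x (by omega : (x:ℕ) ≠ n + 1 - i) hi1)).isLt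
        omega
      by_cases hy' : (y:ℕ) = n + 1 - i
      · have vy := insVal_mid α i hi1 hy'
        have vz := projIdx_val α i z (by omega) hi1
        rw [Fin.lt_iff_val_lt_val] at h1
        have := (α (projIdx i z (by omega : (z:ℕ) ≠ n + 1 - i) hi1)).isLt
        omega
      by_cases hx' : (x:ℕ) = n + 1 - i
      · have vy := insVal_suf α i hi1 (j := y) (a := ⟨(y:ℕ) - 1, by omega⟩)
          (by simp; omega) (by simp; omega)
        have vz := insVal_suf α i hi1 (j := z) (a := ⟨(z:ℕ) - 1, by omega⟩)
          (by simp; omega) (by simp; omega)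
        have hd := hC1 ⟨(y:ℕ) - 1, by omega⟩ ⟨(z:ℕ) - 1, by omega⟩ (by simp; omega)
          (Fin.mk_lt_mk.mpr (by omega))
        rw [Fin.lt_iff_val_lt_val] at h1
        omega
      · apply ha1
        rw [contains312_iff]
        have vx := projIdx_val α i x hx' hi1
        have vy := projIdx_val α i y hy' hi1
        have vz := projIdx_val α i z hz hi1
        rw [Fin.lt_iff_val_lt_val] at h1 h2
        exact ⟨projIdx i x hx' hi1, projIdx i y hy' hi1, projIdx i z hz hi1,
          projIdx_mono i hx' hy' hi1 hxy, projIdx_mono i hy' hz hi1 hyz,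
          Fin.lt_iff_val_lt_val.mpr (by omega), Fin.lt_iff_val_lt_val.mpr (by omega)⟩
    · -- no 2431
      intro hcon
      rw [contains2431_iff] at hcon
      obtain ⟨x, y, z, w, hxy, hyz, hzw, h1, h2, h3⟩ := hcon
      have hxy' := Fin.lt_iff_val_lt_val.mp hxy
      have hyz' := Fin.lt_iff_val_lt_val.mp hyz
      have hzw' := Fin.lt_iff_val_lt_val.mp hzw
      rw [Fin.lt_iff_val_lt_val] at h1 h2 h3
      by_cases hw : (w:ℕ) = n + 1 - i
      · have vw := insVal_mid α i hi1 hw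
        have vx := projIdx_val α i x (by omega) hi1
        have := (α (projIdx i x (by omega : (x:ℕ) ≠ n + 1 - i) hi1)).isLt
        omega
      by_cases hz' : (z:ℕ) = n + 1 - i
      · have vz := insVal_mid α i hi1 hz'
        have vy := projIdx_val α i y (by omega) hi1
        have := (α (projIdx i y (by omega : (y:ℕ) ≠ n + 1 - i) hi1)).isLt
        omega
      by_cases hx' : (x:ℕ) = n + 1 - i
      · have vx := insVal_mid α i hi1 hx'
        have vz := projIdx_val α i z hz' hi1
        have := (α (projIdx i z hz' hi1)).isLt
        omega
      by_cases hy' : (y:ℕ) = n + 1 - i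
      · -- C3 witness
        have vx := insVal_pre α i hi1 (j := x) (a := ⟨(x:ℕ), by omega⟩) rfl (by simp; omega)
        have vz := insVal_suf α i hi1 (j := z) (a := ⟨(z:ℕ) - 1, by omega⟩)
          (by simp; omega) (by simp; omega)
        have vw := insVal_suf α i hi1 (j := w) (a := ⟨(w:ℕ) - 1, by omega⟩)
          (by simp; omega) (by simp; omega)
        exact hC3 ⟨⟨(x:ℕ), by omega⟩, ⟨(z:ℕ) - 1, by omega⟩, ⟨(w:ℕ) - 1, by omega⟩,
          by simp; omega, by simp; omega, Fin.mk_lt_mk.mpr (by omega),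
          Fin.lt_iff_val_lt_val.mpr (by omega), Fin.lt_iff_val_lt_val.mpr (by omega)⟩
      · apply ha2
        rw [contains2431_iff]
        have vx := projIdx_val α i x hx' hi1
        have vy := projIdx_val α i y hy' hi1
        have vz := projIdx_val α i z hz' hi1
        have vw := projIdx_val α i w hw hi1
        exact ⟨projIdx i x hx' hi1, projIdx i y hy' hi1, projIdx i z hz' hi1,
          projIdx i w hw hi1,
          projIdx_mono i hx' hy' hi1 hxy, projIdx_mono i hy' hz' hi1 hyz,
          projIdx_mono i hz' hw hi1 hzw,
          Fin.lt_iff_val_lt_val.mpr (by omega), Fin.lt_iff_val_lt_val.mpr (by omega),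
          Fin.lt_iff_val_lt_val.mpr (by omega)⟩
    · -- no delta
      intro hcon
      rw [containsRev_iff] at hcon
      obtain ⟨f, hf, hdec⟩ := hcon
      by_cases hall : ∀ a, ((f a : Fin (n+1)) : ℕ) ≠ n + 1 - i
      · apply ha3
        rw [containsRev_iff]
        refine ⟨fun a => projIdx i (f a) (hall a) hi1,
          fun a b hab => projIdx_mono i (hall a) (hall b) hi1 (hf hab), fun a b hab => ?_⟩
        beta_reduce
        have va := projIdx_val α i (f a) (hall a) hi1
        have vb := projIdx_val α i (f b) (hall b) hi1
        have hd := hdec a b hab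
        rw [Fin.lt_iff_val_lt_val] at hd ⊢
        omega
      · push_neg at hall
        obtain ⟨a₀, ha₀⟩ := hall
        have ha00 : (a₀ : ℕ) = 0 := by
          by_contra hcon0
          have hlt : (⟨0, by omega⟩ : Fin (p+1)) < a₀ := Fin.mk_lt_mk.mpr (by omega)
          have hd := hdec _ _ hlt
          have hne : ((f ⟨0, by omega⟩ : Fin (n+1)) : ℕ) ≠ n + 1 - i := by
            have := Fin.lt_iff_val_lt_val.mp (hf hlt)
            omega
          have v0 := projIdx_val α i (f ⟨0, by omega⟩) hne hi1
          have va := insVal_mid α i hi1 ha₀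
          rw [Fin.lt_iff_val_lt_val] at hd
          have := (α (projIdx i (f ⟨0, by omega⟩) hne hi1)).isLt
          omega
        have hstep : ∀ j : ℕ, ∀ hj : j ≤ p, n + 1 - i + j ≤ ((f ⟨j, by omega⟩ : Fin (n+1)) : ℕ) := by
          intro j
          induction j with
          | zero =>
            intro _
            have : a₀ = ⟨0, by omega⟩ := by ext; exact ha00
            rw [← this, ha₀]
            omega
          | succ j ih =>
            intro hj
            have h1 := ih (by omega)
            have h2 := Fin.lt_iff_val_lt_val.mp
              (hf (Fin.mk_lt_mk.mpr (by omega) : (⟨j, by omega⟩ : Fin (p+1)) < ⟨j+1, by omega⟩))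
            omega
        have hfin := hstep p le_rfl
        have := (f ⟨p, by omega⟩).isLt
        omega

end InsertAvoids

section NumActive
open Equiv Classical

lemma active_iff (p : ℕ) (hp : 1 ≤ p) {n : ℕ} (α : Equiv.Perm (Fin n))
    (hα : AvoidsSet α ({⟨3, perm312⟩, ⟨4, perm2431⟩,
        ⟨p + 1, (Fin.revPerm : Equiv.Perm (Fin (p + 1)))⟩} : PatternSet)) (i : ℕ) :
    ActiveSite ({⟨3, perm312⟩, ⟨4, perm2431⟩,
        ⟨p + 1, (Fin.revPerm : Equiv.Perm (Fin (p + 1)))⟩} : PatternSet) α i ↔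
      1 ≤ i ∧ i ≤ n + 1 ∧ SiteCond p i α := by
  unfold ActiveSite
  constructor
  · rintro ⟨h1, h2, h3⟩
    exact ⟨h1, h2, (insert_avoids_iff p hp α hα i h1 h2).1 h3⟩
  · rintro ⟨h1, h2, h3⟩
    exact ⟨h1, h2, (insert_avoids_iff p hp α hα i h1 h2).2 h3⟩

lemma dc_eq_Icc (F : Finset ℕ) (h1 : 1 ∈ F) (h0 : ∀ j ∈ F, 1 ≤ j)
    (hdc : ∀ j ∈ F, ∀ j', 1 ≤ j' → j' ≤ j → j' ∈ F) :
    F = Finset.Icc 1 (F.max' ⟨1, h1⟩) := by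
  ext j
  rw [Finset.mem_Icc]
  constructor
  · intro hj
    exact ⟨h0 j hj, F.le_max' j hj⟩
  · rintro ⟨hj1, hj2⟩
    exact hdc _ (F.max'_mem ⟨1, h1⟩) j hj1 hj2

lemma numActive_eq_iff (p : ℕ) (hp : 1 ≤ p) {n : ℕ} (α : Equiv.Perm (Fin n))
    (hα : AvoidsSet α ({⟨3, perm312⟩, ⟨4, perm2431⟩,
        ⟨p + 1, (Fin.revPerm : Equiv.Perm (Fin (p + 1)))⟩} : PatternSet)) (k : ℕ) :
    numActive ({⟨3, perm312⟩, ⟨4, perm2431⟩,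
        ⟨p + 1, (Fin.revPerm : Equiv.Perm (Fin (p + 1)))⟩} : PatternSet) α = k ↔
      1 ≤ k ∧ k ≤ n + 1 ∧ SiteCond p k α ∧ (k = n + 1 ∨ ¬ SiteCond p (k + 1) α) := by
  classical
  set F : Finset ℕ := (Finset.Icc 1 (n+1)).filter (fun j => SiteCond p j α) with hF
  have hmemF : ∀ j, j ∈ F ↔ (1 ≤ j ∧ j ≤ n + 1 ∧ SiteCond p j α) := by
    intro j
    rw [hF, Finset.mem_filter, Finset.mem_Icc]
    tauto
  have h1F : 1 ∈ F := (hmemF 1).2 ⟨le_refl 1, by omega, siteCond_one p hp α⟩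
  have h0F : ∀ j ∈ F, 1 ≤ j := fun j hj => ((hmemF j).1 hj).1
  have hdcF : ∀ j ∈ F, ∀ j', 1 ≤ j' → j' ≤ j → j' ∈ F := by
    intro j hj j' h1 h2
    obtain ⟨hj1, hj2, hj3⟩ := (hmemF j).1 hj
    exact (hmemF j').2 ⟨h1, by omega, siteCond_mono p α hj3 h1 h2⟩
  set K := F.max' ⟨1, h1F⟩ with hK
  have hKF : K ∈ F := F.max'_mem ⟨1, h1F⟩
  obtain ⟨hK1, hK2, hK3⟩ := (hmemF K).1 hKF
  have hNA : numActive ({⟨3, perm312⟩, ⟨4, perm2431⟩,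
      ⟨p + 1, (Fin.revPerm : Equiv.Perm (Fin (p + 1)))⟩} : PatternSet) α = K := by
    unfold numActive
    have hset : {j : ℕ | ActiveSite ({⟨3, perm312⟩, ⟨4, perm2431⟩,
        ⟨p + 1, (Fin.revPerm : Equiv.Perm (Fin (p + 1)))⟩} : PatternSet) α j} = ↑F := by
      ext j
      rw [Set.mem_setOf_eq, active_iff p hp α hα j, Finset.mem_coe, hmemF j]
    rw [hset, Set.ncard_coe_finset, dc_eq_Icc F h1F h0F hdcF, Nat.card_Icc]
    omega
  have hK4 : K = n + 1 ∨ ¬ SiteCond p (K + 1) α := by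
    by_cases hKn : K = n + 1
    · exact Or.inl hKn
    · refine Or.inr fun hcon => ?_
      have : K + 1 ∈ F := (hmemF _).2 ⟨by omega, by omega, hcon⟩
      have := F.le_max' _ this
      omega
  constructor
  · rintro rfl
    exact ⟨by omega, by omega, by rwa [hNA], by rw [hNA]; exact hK4⟩
  · rintro ⟨hk1, hk2, hk3, hk4⟩
    rw [hNA]
    have hkF : k ∈ F := (hmemF k).2 ⟨hk1, hk2, hk3⟩
    have hkK : k ≤ K := F.le_max' k hkF
    rcases eq_or_lt_of_le hkK with h | h
    · omega
    · exfalso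
      rcases hk4 with h4 | h4
      · omega
      · exact h4 (siteCond_mono p α hK3 (by omega) (by omega))

end NumActive

section BetaStructure
open Equiv

/-- Every entry of the length-`(i-1)` suffix of `α` is larger than every earlier entry. -/
def PrefBelow {n : ℕ} (i : ℕ) (α : Equiv.Perm (Fin n)) : Prop :=
  ∀ x s : Fin n, (x:ℕ) < n + 1 - i → n + 1 - i ≤ (s:ℕ) → α x < α s

variable {n : ℕ} (α : Equiv.Perm (Fin n)) {p i : ℕ}

lemma siteCond_insert_le (hC : SiteCond p i α) (hi1 : 1 ≤ i) (hi2 : i ≤ n + 1)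
    {j : ℕ} (hj1 : 1 ≤ j) (hj : j ≤ i) : SiteCond p j (insertMax α i) := by
  obtain ⟨hC1, hC2, hC3⟩ := hC
  refine ⟨?_, by omega, ?_⟩
  · intro a b ha hab
    have hab' := Fin.lt_iff_val_lt_val.mp hab
    have va := insVal_suf α i hi1 (j := a) (a := ⟨(a:ℕ) - 1, by omega⟩)
      (by simp <;> omega) (by simp <;> omega)
    have vb := insVal_suf α i hi1 (j := b) (a := ⟨(b:ℕ) - 1, by omega⟩)
      (by simp <;> omega) (by simp <;> omega)
    have hd := hC1 ⟨(a:ℕ) - 1, by omega⟩ ⟨(b:ℕ) - 1, by omega⟩ (by simp <;> omega)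
      (Fin.mk_lt_mk.mpr (by omega))
    rw [Fin.lt_iff_val_lt_val]
    omega
  · rintro ⟨x, y, z, hx, hy, hyz, hzx, hxy⟩
    have hyz' := Fin.lt_iff_val_lt_val.mp hyz
    rw [Fin.lt_iff_val_lt_val] at hzx hxy
    have vy := insVal_suf α i hi1 (j := y) (a := ⟨(y:ℕ) - 1, by omega⟩)
      (by simp <;> omega) (by simp <;> omega)
    have vz := insVal_suf α i hi1 (j := z) (a := ⟨(z:ℕ) - 1, by omega⟩)
      (by simp <;> omega) (by simp <;> omega)
    rcases lt_trichotomy ((x:ℕ)) (n + 1 - i) with hc | hc | hc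
    · have vx := insVal_pre α i hi1 (j := x) (a := ⟨(x:ℕ), by omega⟩) rfl (by simpa using hc)
      exact hC3 ⟨⟨(x:ℕ), by omega⟩, ⟨(y:ℕ) - 1, by omega⟩, ⟨(z:ℕ) - 1, by omega⟩,
        by simpa using hc, by simp <;> omega, Fin.mk_lt_mk.mpr (by omega),
        Fin.lt_iff_val_lt_val.mpr (by omega), Fin.lt_iff_val_lt_val.mpr (by omega)⟩
    · have vx := insVal_mid α i hi1 hc
      have := (α ⟨(y:ℕ) - 1, by omega⟩).isLt
      omega
    · have vx := insVal_suf α i hi1 (j := x) (a := ⟨(x:ℕ) - 1, by omega⟩)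
        (by simp <;> omega) (by simp <;> omega)
      have hd := hC1 ⟨(x:ℕ) - 1, by omega⟩ ⟨(y:ℕ) - 1, by omega⟩ (by simp <;> omega)
        (Fin.mk_lt_mk.mpr (by omega))
      rw [Fin.lt_iff_val_lt_val] at hd
      omega

lemma siteCond_insert_succ_of (hC : SiteCond p i α) (hQ : PrefBelow i α)
    (hip : i + 1 ≤ p) (hi1 : 1 ≤ i) (hi2 : i ≤ n + 1) :
    SiteCond p (i + 1) (insertMax α i) := by
  obtain ⟨hC1, hC2, hC3⟩ := hC
  refine ⟨?_, hip, ?_⟩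
  · intro a b ha hab
    have hab' := Fin.lt_iff_val_lt_val.mp hab
    have ha' : n + 1 - i ≤ (a : ℕ) := by omega
    have vb := insVal_suf α i hi1 (j := b) (a := ⟨(b:ℕ) - 1, by omega⟩)
      (by simp <;> omega) (by simp <;> omega)
    rcases eq_or_lt_of_le ha' with hc | hc
    · have va := insVal_mid α i hi1 hc.symm
      have := (α ⟨(b:ℕ) - 1, by omega⟩).isLt
      rw [Fin.lt_iff_val_lt_val]
      omega
    · have va := insVal_suf α i hi1 (j := a) (a := ⟨(a:ℕ) - 1, by omega⟩)
        (by simp <;> omega) (by simp <;> omega)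
      have hd := hC1 ⟨(a:ℕ) - 1, by omega⟩ ⟨(b:ℕ) - 1, by omega⟩ (by simp <;> omega)
        (Fin.mk_lt_mk.mpr (by omega))
      rw [Fin.lt_iff_val_lt_val] at hd ⊢
      omega
  · rintro ⟨x, y, z, hx, hy, hyz, hzx, hxy⟩
    have hyz' := Fin.lt_iff_val_lt_val.mp hyz
    rw [Fin.lt_iff_val_lt_val] at hzx hxy
    have hx' : (x:ℕ) < n + 1 - i := by omega
    have vx := insVal_pre α i hi1 (j := x) (a := ⟨(x:ℕ), by omega⟩) rfl (by simpa using hx')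
    have vz := insVal_suf α i hi1 (j := z) (a := ⟨(z:ℕ) - 1, by omega⟩)
      (by simp <;> omega) (by simp <;> omega)
    have hq := hQ ⟨(x:ℕ), by omega⟩ ⟨(z:ℕ) - 1, by omega⟩ (by simpa using hx') (by simp <;> omega)
    rw [Fin.lt_iff_val_lt_val] at hq
    omega

lemma prefBelow_of_siteCond_insert_succ (h : SiteCond p (i + 1) (insertMax α i))
    (hi1 : 1 ≤ i) (hi2 : i ≤ n + 1) : i + 1 ≤ p ∧ PrefBelow i α := by
  obtain ⟨h1, h2, h3⟩ := h
  refine ⟨h2, fun x s hx hs => ?_⟩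
  rcases lt_trichotomy (α x) (α s) with hc | hc | hc
  · exact hc
  · exact absurd (α.injective hc) (by rw [Fin.ext_iff]; omega)
  · exfalso
    rw [Fin.lt_iff_val_lt_val] at hc
    have vx := insVal_pre α i hi1 (j := ⟨(x:ℕ), by omega⟩) (a := x) rfl hx
    have vm := insVal_mid α i hi1 (j := ⟨n + 1 - i, by omega⟩) rfl
    have vs := insVal_suf α i hi1 (j := ⟨(s:ℕ) + 1, by omega⟩) (a := s) rfl hs
    refine h3 ⟨⟨(x:ℕ), by omega⟩, ⟨n + 1 - i, by omega⟩, ⟨(s:ℕ) + 1, by omega⟩,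
      by simp <;> omega, by simp <;> omega, Fin.mk_lt_mk.mpr (by omega),
      Fin.lt_iff_val_lt_val.mpr (by omega), Fin.lt_iff_val_lt_val.mpr ?_⟩
    have := (α x).isLt
    omega

lemma not_siteCond_insert_two (hi1 : 1 ≤ i) (hin : i ≤ n) :
    ¬ SiteCond p (i + 2) (insertMax α i) := by
  rintro ⟨h1, -, -⟩
  have va := insVal_pre α i hi1 (j := ⟨n - i, by omega⟩) (a := ⟨n - i, by omega⟩) rfl
    (by simp <;> omega)
  have vb := insVal_mid α i hi1 (j := ⟨n + 1 - i, by omega⟩) rfl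
  have hd := h1 ⟨n - i, by omega⟩ ⟨n + 1 - i, by omega⟩ (by simp <;> omega)
    (Fin.mk_lt_mk.mpr (by omega))
  rw [Fin.lt_iff_val_lt_val] at hd
  have := (α ⟨n - i, by omega⟩).isLt
  omega

lemma maxIn231_insert_iff (hi1 : 1 ≤ i) (hi2 : i ≤ n + 1) :
    MaxIn231 (insertMax α i) ↔
      ∃ x s : Fin n, (x:ℕ) < n + 1 - i ∧ n + 1 - i ≤ (s:ℕ) ∧ α s < α x := by
  constructor
  · rintro ⟨a, b, c, hab, hbc, hmax, h1, h2⟩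
    have hab' := Fin.lt_iff_val_lt_val.mp hab
    have hbc' := Fin.lt_iff_val_lt_val.mp hbc
    rw [Fin.lt_iff_val_lt_val] at h1 h2
    have hb : (b:ℕ) = n + 1 - i := by
      by_contra hb
      have vb := projIdx_val α i b hb hi1
      have vm := insVal_mid α i hi1 (j := ⟨n + 1 - i, by omega⟩) rfl
      have hm := Fin.le_iff_val_le_val.mp (hmax ⟨n + 1 - i, by omega⟩)
      have := (α (projIdx i b hb hi1)).isLt
      omega
    have va := insVal_pre α i hi1 (j := a) (a := ⟨(a:ℕ), by omega⟩) rfl (by simp <;> omega)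
    have vc := insVal_suf α i hi1 (j := c) (a := ⟨(c:ℕ) - 1, by omega⟩)
      (by simp <;> omega) (by simp <;> omega)
    exact ⟨⟨(a:ℕ), by omega⟩, ⟨(c:ℕ) - 1, by omega⟩, by simp <;> omega, by simp <;> omega,
      Fin.lt_iff_val_lt_val.mpr (by omega)⟩
  · rintro ⟨x, s, hx, hs, hd⟩
    rw [Fin.lt_iff_val_lt_val] at hd
    have vx := insVal_pre α i hi1 (j := ⟨(x:ℕ), by omega⟩) (a := x) rfl hx
    have vm := insVal_mid α i hi1 (j := ⟨n + 1 - i, by omega⟩) rfl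
    have vs := insVal_suf α i hi1 (j := ⟨(s:ℕ) + 1, by omega⟩) (a := s) rfl hs
    refine ⟨⟨(x:ℕ), by omega⟩, ⟨n + 1 - i, by omega⟩, ⟨(s:ℕ) + 1, by omega⟩,
      Fin.mk_lt_mk.mpr (by omega), Fin.mk_lt_mk.mpr (by omega), ?_,
      Fin.lt_iff_val_lt_val.mpr ?_, Fin.lt_iff_val_lt_val.mpr (by omega)⟩
    · intro w
      rw [Fin.le_iff_val_le_val, vm]
      exact Nat.lt_succ_iff.mp (insertMax α i w).isLt
    · have := (α x).isLt
      omega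

lemma lastDec_insert_iff (hC : SiteCond p i α) (hi1 : 1 ≤ i) (hi2 : i ≤ n + 1) :
    LastDecreasing (insertMax α i) p ↔ (p ≤ i ∨ i = n + 1) := by
  obtain ⟨hC1, hC2, hC3⟩ := hC
  constructor
  · intro h
    by_contra hcon
    push_neg at hcon
    obtain ⟨hip, hin⟩ := hcon
    have va := insVal_pre α i hi1 (j := ⟨n - i, by omega⟩) (a := ⟨n - i, by omega⟩) rfl
      (by simp <;> omega)
    have vb := insVal_mid α i hi1 (j := ⟨n + 1 - i, by omega⟩) rfl
    have hd := h ⟨n - i, by omega⟩ ⟨n + 1 - i, by omega⟩ (by simp <;> omega)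
      (Fin.mk_lt_mk.mpr (by omega))
    rw [Fin.lt_iff_val_lt_val] at hd
    have := (α ⟨n - i, by omega⟩).isLt
    omega
  · intro h a b ha hab
    have hab' := Fin.lt_iff_val_lt_val.mp hab
    have ha' : n + 1 - i ≤ (a : ℕ) := by omega
    have vb := insVal_suf α i hi1 (j := b) (a := ⟨(b:ℕ) - 1, by omega⟩)
      (by simp <;> omega) (by simp <;> omega)
    rcases eq_or_lt_of_le ha' with hc | hc
    · have va := insVal_mid α i hi1 hc.symm
      have := (α ⟨(b:ℕ) - 1, by omega⟩).isLt
      rw [Fin.lt_iff_val_lt_val]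
      omega
    · have va := insVal_suf α i hi1 (j := a) (a := ⟨(a:ℕ) - 1, by omega⟩)
        (by simp <;> omega) (by simp <;> omega)
      have hd := hC1 ⟨(a:ℕ) - 1, by omega⟩ ⟨(b:ℕ) - 1, by omega⟩ (by simp <;> omega)
        (Fin.mk_lt_mk.mpr (by omega))
      rw [Fin.lt_iff_val_lt_val] at hd ⊢
      omega

end BetaStructure

section Deep
open Equiv

variable {n : ℕ} {α : Equiv.Perm (Fin n)} {p k : ℕ}

lemma val_lt_of_ne {a b : Fin n} (h : ¬ α b < α a) (hne : a ≠ b) : α a < α b := by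
  rcases lt_trichotomy (α a) (α b) with hc | hc | hc
  · exact hc
  · exact absurd (α.injective hc) hne
  · exact absurd hc h

/-- If some suffix entry is below a prefix entry `x`, then all suffix entries are. -/
lemma dominate (hC : SiteCond p k α) {x s₀ : Fin n} (hx : (x:ℕ) < n + 1 - k)
    (hs : n + 1 - k ≤ (s₀:ℕ)) (hxs : α s₀ < α x) :
    ∀ y : Fin n, n + 1 - k ≤ (y:ℕ) → α y < α x := by
  obtain ⟨hC1, hC2, hC3⟩ := hC
  intro y hy
  rcases lt_trichotomy (α y) (α x) with hc | hc | hc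
  · exact hc
  · exact absurd (α.injective hc) (by simp only [ne_eq, Fin.ext_iff]; omega)
  · exfalso
    rcases lt_trichotomy ((y:ℕ)) ((s₀:ℕ)) with hc' | hc' | hc'
    · exact hC3 ⟨x, y, s₀, hx, hy, Fin.lt_iff_val_lt_val.mpr hc', hxs, hc⟩
    · rw [show y = s₀ from Fin.ext hc'] at hc
      exact absurd hxs (lt_asymm hc)
    · exact absurd (hxs.trans hc) (lt_asymm (hC1 s₀ y hs (Fin.lt_iff_val_lt_val.mpr hc')))

lemma not_maxIn231_of_prefBelow (hC : SiteCond p k α) (hQ : PrefBelow k α)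
    (hk2 : 2 ≤ k) (hkn : k ≤ n + 1) : ¬ MaxIn231 α := by
  obtain ⟨hC1, hC2, hC3⟩ := hC
  rintro ⟨a, b, c, hab, hbc, hmax, h1, h2⟩
  have hn1 : 1 ≤ n := by have := b.isLt; omega
  by_cases hb : n + 1 - k ≤ (b:ℕ)
  · have hc' : n + 1 - k ≤ (c:ℕ) := by
      have := Fin.lt_iff_val_lt_val.mp hbc; omega
    by_cases ha : (a:ℕ) < n + 1 - k
    · exact absurd (hQ a c ha hc') (lt_asymm h2)
    · exact absurd (hC1 a b (by omega) hab) (lt_asymm h1)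
  · have hs : n + 1 - k ≤ n - 1 := by omega
    have := hQ b ⟨n - 1, by omega⟩ (by omega) (by simp <;> omega)
    exact absurd (hmax ⟨n - 1, by omega⟩) (not_le.mpr this)

lemma not_maxIn231_of_dec (hC1 : ∀ a b : Fin n, n + 1 - (n+1) ≤ (a:ℕ) → a < b → α b < α a) :
    ¬ MaxIn231 α := by
  rintro ⟨a, b, c, hab, hbc, hmax, h1, h2⟩
  exact absurd (hC1 a b (by omega) hab) (lt_asymm h1)

lemma eq_k_of_prefBelow {i : ℕ} (hC_k : SiteCond p k α) (hi2 : 2 ≤ i) (hik : i ≤ k)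
    (hkn : k ≤ n + 1) (hQ : PrefBelow i α) : i = k := by
  by_contra hne
  have hik' : i + 1 ≤ k := by omega
  obtain ⟨hC1, -, -⟩ := siteCond_mono p α hC_k (by omega) hik'
  have hd := hC1 ⟨n - i, by omega⟩ ⟨n + 1 - i, by omega⟩ (by simp <;> omega)
    (Fin.mk_lt_mk.mpr (by omega))
  have hq := hQ ⟨n - i, by omega⟩ ⟨n + 1 - i, by omega⟩ (by simp <;> omega) (by simp)
  exact absurd hq (lt_asymm hd)

lemma Q_of_color (h312 : ¬ Contains perm312 α) (h2431 : ¬ Contains perm2431 α)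
    (hC_k : SiteCond p k α) (hk4 : k = n + 1 ∨ ¬ SiteCond p (k + 1) α)
    (hk2 : 2 ≤ k) (hkn : k ≤ n + 1)
    (hd0 : ¬ MaxIn231 α ∨ LastDecreasing α p) (hkp : k < p) : PrefBelow k α := by
  by_contra hnQ
  unfold PrefBelow at hnQ
  push_neg at hnQ
  obtain ⟨x, s₀, hx, hs, hge⟩ := hnQ
  have hxs : α s₀ < α x := val_lt_of_ne (by exact fun h => absurd h (not_lt.mpr hge))
    (by rw [Ne, Fin.ext_iff]; omega)
  have hdom := dominate hC_k hx hs hxs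
  have hkn' : k ≤ n := by
    rcases Nat.lt_or_ge k (n + 1) with h | h
    · omega
    · exfalso; have : k = n + 1 := by omega
      subst this; omega
  have hnc : ¬ SiteCond p (k + 1) α := by
    rcases hk4 with h | h
    · omega
    · exact h
  rw [SiteCond] at hnc
  push_neg at hnc
  by_cases hC1' : ∀ a b : Fin n, n + 1 - (k + 1) ≤ (a:ℕ) → a < b → α b < α a
  · -- C1' holds, so the 2431-condition must fail
    obtain ⟨x', y, z, hx', hy, hyz, hzx', hx'y⟩ := hnc hC1' (by omega)
    have hy' : (y:ℕ) = n - k := by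
      by_contra hcon
      exact hC_k.2.2 ⟨x', y, z, by omega, by omega, hyz, hzx', hx'y⟩
    -- α y is the global maximum
    have hmax : ∀ w, α w ≤ α y := by
      intro w
      by_contra hcon
      push_neg at hcon
      rcases Nat.lt_or_ge ((w:ℕ)) (n - k) with hw | hw
      · rcases lt_trichotomy ((w:ℕ)) ((x':ℕ)) with hc | hc | hc
        · -- 312 : (w, x', y)
          exact h312 ((contains312_iff α).2 ⟨w, x', y, Fin.lt_iff_val_lt_val.mpr hc,
            Fin.lt_iff_val_lt_val.mpr (by omega), hx'y, hcon⟩)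
        · rw [show w = x' from Fin.ext hc] at hcon
          exact absurd (hx'y.trans hcon) (lt_irrefl _)
        · -- 2431 : (x', w, y, z)
          exact h2431 ((contains2431_iff α).2 ⟨x', w, y, z, Fin.lt_iff_val_lt_val.mpr hc,
            Fin.lt_iff_val_lt_val.mpr (by omega), hyz, hzx', hx'y, hcon⟩)
      · have hwy : w ≠ y := fun h => by rw [h] at hcon; exact lt_irrefl _ hcon
        have : y < w := Fin.lt_iff_val_lt_val.mpr (by rw [Ne, Fin.ext_iff] at hwy; omega)
        exact absurd (hC1' y w (by omega) this) (lt_asymm hcon)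
    have hM : MaxIn231 α := ⟨x', y, z, Fin.lt_iff_val_lt_val.mpr (by omega), hyz,
      hmax, hx'y, hzx'⟩
    have hL : LastDecreasing α p := hd0.resolve_left (not_not_intro hM)
    have hd := hL ⟨n - k - 1, by omega⟩ ⟨n - k, by omega⟩ (by simp <;> omega)
      (Fin.mk_lt_mk.mpr (by omega))
    have : (⟨n - k, by omega⟩ : Fin n) = y := Fin.ext (by simp <;> omega)
    rw [this] at hd
    exact absurd (hmax ⟨n - k - 1, by omega⟩) (not_le.mpr hd)
  · -- C1' fails
    push_neg at hC1'
    obtain ⟨a, b, hab', hab, hcon⟩ := hC1'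
    have hab2 : α a < α b := val_lt_of_ne (not_lt.mpr hcon) (ne_of_lt hab)
    have ha' : (a:ℕ) = n - k := by
      by_contra hcon2
      exact absurd (hC_k.1 a b (by omega) hab) (lt_asymm hab2)
    have hb' : n + 1 - k ≤ (b:ℕ) := by
      have := Fin.lt_iff_val_lt_val.mp hab; omega
    have hbx : α b < α x := hdom b hb'
    rcases lt_trichotomy ((x:ℕ)) ((a:ℕ)) with hc | hc | hc
    · -- 312 : (x, a, b)
      exact h312 ((contains312_iff α).2 ⟨x, a, b, Fin.lt_iff_val_lt_val.mpr hc, hab,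
        hab2, hbx⟩)
    · rw [show x = a from Fin.ext hc] at hbx
      exact absurd (hab2.trans hbx) (lt_irrefl _)
    · omega

lemma color_of_k_eq_p (h312 : ¬ Contains perm312 α)
    (hC_k : SiteCond p k α) (hkp : k = p) (hp2 : 2 ≤ p) (hkn : k ≤ n + 1) :
    ¬ MaxIn231 α ∨ LastDecreasing α p := by
  by_cases hQ : PrefBelow k α
  · exact Or.inl (not_maxIn231_of_prefBelow hC_k hQ (by omega) hkn)
  · right
    unfold PrefBelow at hQ
    push_neg at hQ
    obtain ⟨x, s₀, hx, hs, hge⟩ := hQ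
    have hxs : α s₀ < α x := val_lt_of_ne (fun h => absurd h (not_lt.mpr hge))
      (by rw [Ne, Fin.ext_iff]; omega)
    have hdom := dominate hC_k hx hs hxs
    intro a b ha hab
    rcases Nat.lt_or_ge ((a:ℕ)) (n + 1 - k) with hc | hc
    · have ha2 : (a:ℕ) = n - k := by omega
      have hb2 : n + 1 - k ≤ (b:ℕ) := by
        have := Fin.lt_iff_val_lt_val.mp hab; omega
      by_contra hcon
      have hab2 : α a < α b := val_lt_of_ne hcon (ne_of_lt hab)
      have hbx : α b < α x := hdom b hb2
      rcases lt_trichotomy ((x:ℕ)) ((a:ℕ)) with hc' | hc' | hc'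
      · exact h312 ((contains312_iff α).2 ⟨x, a, b, Fin.lt_iff_val_lt_val.mpr hc', hab,
          hab2, hbx⟩)
      · rw [show x = a from Fin.ext hc'] at hbx
        exact absurd (hab2.trans hbx) (lt_irrefl _)
      · omega
    · exact hC_k.1 a b hc hab

end Deep

section Assembly
open Equiv

lemma colorD_eq_zero_iff {n p : ℕ} (α : Equiv.Perm (Fin n)) :
    colorD p α = 0 ↔ (¬ MaxIn231 α ∨ LastDecreasing α p) := by
  unfold colorD
  split
  · next h => exact iff_of_false one_ne_zero (by tauto)
  · next h => exact iff_of_true rfl (by tauto)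

lemma colorD_eq_one_iff {n p : ℕ} (α : Equiv.Perm (Fin n)) :
    colorD p α = 1 ↔ (MaxIn231 α ∧ ¬ LastDecreasing α p) := by
  unfold colorD
  split
  · next h => exact iff_of_true rfl h
  · next h => exact iff_of_false zero_ne_one h

lemma prefBelow_one {n : ℕ} (α : Equiv.Perm (Fin n)) : PrefBelow 1 α := by
  intro x s hx hs
  have := s.isLt
  omega

theorem cRegular_312_2431_delta' (p : ℕ) (hp : 2 ≤ p) :
    (∀ (n : ℕ) (α : Equiv.Perm (Fin n)), AvoidsSet α ({⟨3, perm312⟩, ⟨4, perm2431⟩,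
      ⟨p + 1, (Fin.revPerm : Equiv.Perm (Fin (p + 1)))⟩} : PatternSet) →
      ActiveSite ({⟨3, perm312⟩, ⟨4, perm2431⟩,
      ⟨p + 1, (Fin.revPerm : Equiv.Perm (Fin (p + 1)))⟩} : PatternSet) α 1) ∧
    (∀ (n : ℕ) (α : Equiv.Perm (Fin n)) (k i : ℕ),
      AvoidsSet α ({⟨3, perm312⟩, ⟨4, perm2431⟩,
        ⟨p + 1, (Fin.revPerm : Equiv.Perm (Fin (p + 1)))⟩} : PatternSet) →
      numActive ({⟨3, perm312⟩, ⟨4, perm2431⟩,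
        ⟨p + 1, (Fin.revPerm : Equiv.Perm (Fin (p + 1)))⟩} : PatternSet) α = k →
      1 ≤ i → i ≤ k →
      (numActive ({⟨3, perm312⟩, ⟨4, perm2431⟩,
          ⟨p + 1, (Fin.revPerm : Equiv.Perm (Fin (p + 1)))⟩} : PatternSet) (insertMax α i) =
        if i = 1 ∨ (i = k ∧ colorD p α = 0 ∧ k < p) then i + 1 else i) ∧
      (colorD p (insertMax α i) =
        if i = 1 ∨ (i = k ∧ colorD p α = 0) then 0 else 1)) := by
  constructor
  · intro n α hα
    exact (active_iff p (by omega) α hα 1).2 ⟨le_refl 1, by omega, siteCond_one p (by omega) α⟩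
  · intro n α k i hα hk hi1 hik
    obtain ⟨hk1, hk2, hCk, hk4⟩ := (numActive_eq_iff p (by omega) α hα k).1 hk
    have hi2 : i ≤ n + 1 := by omega
    have hCi : SiteCond p i α := siteCond_mono p α hCk hi1 hik
    have hip : i ≤ p := hCi.2.1
    have hkp' : k ≤ p := hCk.2.1
    obtain ⟨ha1, ha2, ha3⟩ := (avoids_iff p α).1 hα
    have hβ : AvoidsSet (insertMax α i) ({⟨3, perm312⟩, ⟨4, perm2431⟩,
        ⟨p + 1, (Fin.revPerm : Equiv.Perm (Fin (p + 1)))⟩} : PatternSet) :=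
      (insert_avoids_iff p (by omega) α hα i hi1 hi2).2 hCi
    by_cases hQ : (i + 1 ≤ p ∧ PrefBelow i α)
    · -- active case : i + 1 active sites
      have hcond : i = 1 ∨ (i = k ∧ colorD p α = 0 ∧ k < p) := by
        by_cases hi1' : i = 1
        · exact Or.inl hi1'
        · have hi2' : 2 ≤ i := by omega
          have hik' : i = k := eq_k_of_prefBelow hCk hi2' hik hk2 hQ.2
          have hcol : colorD p α = 0 := (colorD_eq_zero_iff α).2
            (Or.inl (not_maxIn231_of_prefBelow hCi hQ.2 hi2' hi2))
          exact Or.inr ⟨hik', hcol, by omega⟩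
      have hNA : numActive ({⟨3, perm312⟩, ⟨4, perm2431⟩,
          ⟨p + 1, (Fin.revPerm : Equiv.Perm (Fin (p + 1)))⟩} : PatternSet)
          (insertMax α i) = i + 1 := by
        rw [numActive_eq_iff p (by omega) (insertMax α i) hβ (i + 1)]
        refine ⟨by omega, by omega, siteCond_insert_succ_of α hCi hQ.2 hQ.1 hi1 hi2, ?_⟩
        by_cases hin : i ≤ n
        · exact Or.inr (not_siteCond_insert_two α hi1 hin)
        · exact Or.inl (by omega)
      have hcol_b : colorD p (insertMax α i) = 0 := by
        rw [colorD_eq_zero_iff]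
        left
        rw [maxIn231_insert_iff α hi1 hi2]
        rintro ⟨x, s, hx, hs, hd⟩
        exact absurd (hQ.2 x s hx hs) (lt_asymm hd)
      have hcondb : i = 1 ∨ (i = k ∧ colorD p α = 0) := by
        rcases hcond with h | h
        · exact Or.inl h
        · exact Or.inr ⟨h.1, h.2.1⟩
      exact ⟨by rw [hNA, if_pos hcond], by rw [hcol_b, if_pos hcondb]⟩
    · -- inactive case : i active sites
      have hi1' : i ≠ 1 := by
        rintro rfl
        exact hQ ⟨by omega, prefBelow_one α⟩
      have hi2' : 2 ≤ i := by omega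
      have hNA : numActive ({⟨3, perm312⟩, ⟨4, perm2431⟩,
          ⟨p + 1, (Fin.revPerm : Equiv.Perm (Fin (p + 1)))⟩} : PatternSet)
          (insertMax α i) = i := by
        rw [numActive_eq_iff p (by omega) (insertMax α i) hβ i]
        exact ⟨hi1, by omega, siteCond_insert_le α hCi hi1 hi2 hi1 le_rfl,
          Or.inr (fun hcon => hQ (prefBelow_of_siteCond_insert_succ α hcon hi1 hi2))⟩
      have hconda : ¬ (i = 1 ∨ (i = k ∧ colorD p α = 0 ∧ k < p)) := by
        rintro (h | ⟨hik2, hcol, hkp⟩)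
        · exact hi1' h
        · have hd0 := (colorD_eq_zero_iff α).1 hcol
          have hQ' := Q_of_color ha1 ha2 hCk hk4 (by omega) hk2 hd0 hkp
          rw [← hik2] at hQ'
          exact hQ ⟨by omega, hQ'⟩
      refine ⟨by rw [hNA, if_neg hconda], ?_⟩
      by_cases hcondb : i = 1 ∨ (i = k ∧ colorD p α = 0)
      · rw [if_pos hcondb]
        obtain ⟨hik2, hcol⟩ := hcondb.resolve_left hi1'
        have hpi : p ≤ i := by
          by_contra hpi
          have hd0 := (colorD_eq_zero_iff α).1 hcol
          have hQ' := Q_of_color ha1 ha2 hCk hk4 (by omega) hk2 hd0 (by omega)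
          rw [← hik2] at hQ'
          exact hQ ⟨by omega, hQ'⟩
        rw [colorD_eq_zero_iff]
        exact Or.inr ((lastDec_insert_iff α hCi hi1 hi2).2 (Or.inl hpi))
      · rw [if_neg hcondb]
        push_neg at hcondb
        obtain ⟨-, hcondb2⟩ := hcondb
        have hipp : i < p := by
          by_contra hcon
          have hik2 : i = k := by omega
          have hd0 := color_of_k_eq_p ha1 hCk (by omega) hp hk2
          exact hcondb2 hik2 ((colorD_eq_zero_iff α).2 hd0)
        have hin : i ≤ n := by
          by_contra hcon
          have hik2 : i = k := by omega
          have hkn1 : k = n + 1 := by omega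
          have hdec : ¬ MaxIn231 α := not_maxIn231_of_dec
            (fun a b ha hab => hCk.1 a b (by omega) hab)
          exact hcondb2 hik2 ((colorD_eq_zero_iff α).2 (Or.inl hdec))
        have hnQ' : ¬ PrefBelow i α := fun h => hQ ⟨by omega, h⟩
        unfold PrefBelow at hnQ'
        push_neg at hnQ'
        obtain ⟨x, s, hx, hs, hge⟩ := hnQ'
        have hd : α s < α x := val_lt_of_ne (not_lt.mpr hge)
          (by simp only [ne_eq, Fin.ext_iff]; omega)
        rw [colorD_eq_one_iff]
        constructor
        · exact (maxIn231_insert_iff α hi1 hi2).2 ⟨x, s, hx, hs, hd⟩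
        · intro hcon
          rcases (lastDec_insert_iff α hCi hi1 hi2).1 hcon with h | h <;> omega

end Assembly
/-- For `p ≥ 2` and `P = {312, 2431, (p+1)p…21}`, with the color
`d(α) = 1` iff the largest entry of `α` plays the role of `3` in an occurrence of `231`
and the last `p` entries of `α` are not decreasing (`d(α) = 0` otherwise): every
`α ∈ S_n(P)` has its first site active, and if `α ∈ S_n(P)` has exactly `k` active
sites and `1 ≤ i ≤ k`, then (a) `α^{↓i}` has `i + 1` active sites if `i = 1` or
(`i = k`, `d(α) = 0` and `k < p`), and `i` active sites otherwise; (b) `d(α^{↓i}) = 0`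
if `i = 1` or (`i = k` and `d(α) = 0`), and `d(α^{↓i}) = 1` otherwise. Hence `P` is a
colored regular set of forbidden patterns with colors `{0, 1}`. -/
theorem cRegular_312_2431_delta (p : ℕ) (hp : 2 ≤ p) (P : PatternSet)
    (hP : P = {⟨3, perm312⟩, ⟨4, perm2431⟩,
      ⟨p + 1, (Fin.revPerm : Equiv.Perm (Fin (p + 1)))⟩}) :
    (∀ (n : ℕ) (α : Equiv.Perm (Fin n)), AvoidsSet α P → ActiveSite P α 1) ∧
    (∀ (n : ℕ) (α : Equiv.Perm (Fin n)) (k i : ℕ), AvoidsSet α P →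
      numActive P α = k → 1 ≤ i → i ≤ k →
      (numActive P (insertMax α i) =
        if i = 1 ∨ (i = k ∧ colorD p α = 0 ∧ k < p) then i + 1 else i) ∧
      (colorD p (insertMax α i) =
        if i = 1 ∨ (i = k ∧ colorD p α = 0) then 0 else 1)) := by
  subst hP
  exact cRegular_312_2431_delta' p hp
end

section
/- Let P={312, 2431}. For α∈S_n(P), define d(α)=1 if the entry n plays the role of the largest value in an occurrence of the pattern 231 in α, and d(α)=0 otherwise. Then for every α∈S_n(P), site 1 of α is active; and if α∈S_n(P) has exactly k active sites and 1≤i≤k, then: (a) the number of active sites of α^{↓i} equals i+1 if i=1 or (i=k and d(α)=0), and equals i otherwise; (b) d(α^{↓i})=0 if i=1 or (i=k and d(α)=0), and d(α^{↓i})=1 otherwise. Hence P is a colored regular set of forbidden patterns with color function d and set of colors {0,1}. -/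
open Equiv

namespace Aux
variable {n : ℕ}

def ipos (n i : ℕ) : Fin (n+1) := ⟨n - (i-1), by omega⟩

lemma lift_apply (α : Perm (Fin n)) (x : Fin n) :
    (finSuccEquivLast.permCongr.symm α.optionCongr) x.castSucc = (α x).castSucc := by
  simp [Equiv.permCongr_apply]

lemma lift_apply_last (α : Perm (Fin n)) :
    (finSuccEquivLast.permCongr.symm α.optionCongr) (Fin.last n) = Fin.last n := by
  simp [Equiv.permCongr_apply]

lemma R_apply (p j : Fin (n+1)) :
    (Fin.revPerm * Fin.cycleRange (Fin.rev p) * Fin.revPerm : Perm (Fin (n+1))) j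
      = if j < p then j else if j = p then Fin.last n else ⟨j.val - 1, by omega⟩ := by
  show Fin.rev (Fin.cycleRange (Fin.rev p) (Fin.rev j)) = _
  rcases lt_trichotomy j p with h | h | h
  · rw [if_pos h, Fin.cycleRange_of_gt (by simpa using h), Fin.rev_rev]
  · subst h
    rw [if_neg (lt_irrefl _), if_pos rfl, Fin.cycleRange_self]
    ext; simp [Fin.rev]
  · rw [if_neg (not_lt_of_gt h), if_neg (ne_of_gt h),
      Fin.cycleRange_of_lt (by simpa using h)]
    have hj : (p : ℕ) < (j : ℕ) := h
    have h1 : (Fin.rev j + 1 : Fin (n+1)) = ⟨n + 1 - j, by omega⟩ := by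
      have hlt : Fin.rev j < Fin.last n := by
        rw [Fin.lt_iff_val_lt_val]; simp only [Fin.val_rev, Fin.val_last]; omega
      ext; rw [Fin.val_add_one_of_lt hlt]; simp [Fin.rev]; omega
    rw [h1]
    ext; simp [Fin.rev]; omega

lemma insertMax_eq (α : Perm (Fin n)) (i : ℕ) (j : Fin (n+1)) :
    insertMax α i j = if h : j < ipos n i then (α ⟨j, by omega⟩).castSucc
      else if h2 : j = ipos n i then Fin.last n
      else (α ⟨j.val - 1, by
        have h3 : (ipos n i) < j := by
          rcases Fin.lt_or_lt_of_ne h2 with h4 | h4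
          · exact absurd h4 h
          · exact h4
        have h4 : ((ipos n i : Fin (n+1)) : ℕ) < (j : ℕ) := h3
        omega⟩).castSucc := by
  have key : insertMax α i j = (finSuccEquivLast.permCongr.symm α.optionCongr)
      ((Fin.revPerm * Fin.cycleRange (Fin.rev (ipos n i)) * Fin.revPerm : Perm (Fin (n+1))) j) := by
    simp only [insertMax, ipos, Equiv.Perm.mul_apply]
  rw [key, R_apply (ipos n i) j]
  rcases lt_trichotomy j (ipos n i) with h | h | h
  · rw [if_pos h, dif_pos h]
    exact lift_apply α ⟨j.val, by omega⟩
  · subst h; rw [if_neg (lt_irrefl _), if_pos rfl, dif_neg (lt_irrefl _), dif_pos rfl, lift_apply_last]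
  · rw [if_neg (not_lt_of_gt h), if_neg (ne_of_gt h), dif_neg (not_lt_of_gt h),
      dif_neg (ne_of_gt h)]
    have hb : (j:ℕ) - 1 < n := by
      have hj : ((ipos n i : Fin (n+1)) : ℕ) < (j : ℕ) := h
      omega
    exact lift_apply α ⟨(j:ℕ) - 1, hb⟩

lemma ins_lt (α : Perm (Fin n)) (i : ℕ) (j : Fin (n+1)) (h : j < ipos n i) :
    insertMax α i j = (α ⟨j, by have : (j:ℕ) < (ipos n i : Fin (n+1)).val := h; omega⟩).castSucc := by
  rw [insertMax_eq, dif_pos h]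

lemma ins_eq (α : Perm (Fin n)) (i : ℕ) :
    insertMax α i (ipos n i) = Fin.last n := by
  rw [insertMax_eq, dif_neg (lt_irrefl _), dif_pos rfl]

lemma ins_gt (α : Perm (Fin n)) (i : ℕ) (j : Fin (n+1)) (h : ipos n i < j) :
    insertMax α i j = (α ⟨(j:ℕ) - 1, by have : ((ipos n i : Fin (n+1)):ℕ) < (j:ℕ) := h; omega⟩).castSucc := by
  rw [insertMax_eq, dif_neg (not_lt_of_gt h), dif_neg (ne_of_gt h)]

lemma strictMono3 {N : ℕ} {f : Fin 3 → Fin N} (h01 : f 0 < f 1) (h12 : f 1 < f 2) :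
    StrictMono f := by
  intro a b hab
  fin_cases a <;> fin_cases b <;> first
    | exact absurd hab (by decide)
    | exact h01
    | exact h12
    | exact h01.trans h12

lemma strictMono4 {N : ℕ} {f : Fin 4 → Fin N} (h01 : f 0 < f 1) (h12 : f 1 < f 2) (h23 : f 2 < f 3) :
    StrictMono f := by
  intro a b hab
  fin_cases a <;> fin_cases b <;> first
    | exact absurd hab (by decide)
    | exact h01
    | exact h12
    | exact h23
    | exact h01.trans h12
    | exact h12.trans h23
    | exact (h01.trans h12).trans h23

lemma contains312 {N : ℕ} (π : Perm (Fin N)) (f0 f1 f2 : Fin N) (h01 : f0 < f1) (h12 : f1 < f2)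
    (hv1 : π f1 < π f2) (hv2 : π f2 < π f0) : Contains perm312 π := by
  refine ⟨![f0, f1, f2], strictMono3 (by simpa using h01) (by simpa using h12), ?_⟩
  intro a b
  fin_cases a <;> fin_cases b <;> simp [perm312] <;> omega

lemma contains2431 {N : ℕ} (π : Perm (Fin N)) (f0 f1 f2 f3 : Fin N) (h01 : f0 < f1) (h12 : f1 < f2)
    (h23 : f2 < f3) (hv1 : π f3 < π f0) (hv2 : π f0 < π f2) (hv3 : π f2 < π f1) :
    Contains perm2431 π := by
  refine ⟨![f0, f1, f2, f3], strictMono4 (by simpa using h01) (by simpa using h12) (by simpa using h23), ?_⟩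
  intro a b
  fin_cases a <;> fin_cases b <;> simp [perm2431] <;> omega

/-- the pair pattern set -/
def PP : PatternSet := {⟨3, perm312⟩, ⟨4, perm2431⟩}

lemma avoids_pp_iff {N : ℕ} (π : Perm (Fin N)) :
    AvoidsSet π PP ↔ ¬ Contains perm312 π ∧ ¬ Contains perm2431 π := by
  constructor
  · intro h; exact ⟨h ⟨3, perm312⟩ (Or.inl rfl), h ⟨4, perm2431⟩ (Or.inr rfl)⟩
  · rintro ⟨h1, h2⟩ τ hτ
    rcases hτ with h | h <;> subst h
    · exact h1
    · exact h2

/-- last `i-1` entries decreasing -/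
def Dec (α : Perm (Fin n)) (i : ℕ) : Prop :=
  ∀ x y : Fin n, n + 1 ≤ (x:ℕ) + i → x < y → α y < α x

/-- no prefix entry sits strictly between two tail entries (in the 2431 shape) -/
def NoBad (α : Perm (Fin n)) (i : ℕ) : Prop :=
  ∀ a x y : Fin n, (a:ℕ) + i ≤ n → n + 1 ≤ (x:ℕ) + i → x < y →
    ¬ (α y < α a ∧ α a < α x)

/-- every prefix entry is below every tail entry -/
def Cc (α : Perm (Fin n)) (i : ℕ) : Prop :=
  ∀ a y : Fin n, (a:ℕ) + i ≤ n → n + 1 ≤ (y:ℕ) + i → α a < α y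

lemma transfer {k : ℕ} (σ : Perm (Fin k)) (α : Perm (Fin n)) (i : ℕ)
    (f : Fin k → Fin (n+1)) (hmono : StrictMono f)
    (hiff : ∀ a b, σ a < σ b ↔ insertMax α i (f a) < insertMax α i (f b))
    (hne : ∀ t, f t ≠ ipos n i) : Contains σ α := by
  classical
  have hval : ∀ t : Fin k, ∃ x : Fin n, insertMax α i (f t) = (α x).castSucc ∧
      (((f t :ℕ) < (ipos n i : Fin (n+1)) ∧ (x:ℕ) = (f t : ℕ)) ∨
       (((ipos n i : Fin (n+1)):ℕ) < (f t :ℕ) ∧ (x:ℕ) + 1 = (f t : ℕ))) := by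
    intro t
    rcases Fin.lt_or_lt_of_ne (hne t) with h | h
    · exact ⟨_, ins_lt α i (f t) h, Or.inl ⟨h, rfl⟩⟩
    · refine ⟨_, ins_gt α i (f t) h, Or.inr ⟨h, ?_⟩⟩
      have : ((ipos n i : Fin (n+1)):ℕ) < (f t :ℕ) := h
      simp; omega
  choose g hg1 hg2 using hval
  refine ⟨g, ?_, ?_⟩
  · intro s t hst
    have hf := hmono hst
    have hf' : (f s : ℕ) < (f t : ℕ) := hf
    have : (g s : ℕ) < (g t : ℕ) := by
      rcases hg2 s with ⟨h1, h2⟩ | ⟨h1, h2⟩ <;> rcases hg2 t with ⟨h3, h4⟩ | ⟨h3, h4⟩ <;> omega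
    exact this
  · intro a b
    rw [hiff a b, hg1 a, hg1 b, Fin.castSucc_lt_castSucc_iff]

end Aux
namespace Aux
variable {n : ℕ}

lemma ipos_val (i : ℕ) : ((ipos n i : Fin (n+1)) : ℕ) = n - (i - 1) := rfl

lemma lt_ipos_of (i : ℕ) (a : Fin n) (h : (a:ℕ) + i ≤ n) (h1 : 1 ≤ i) :
    a.castSucc < ipos n i := by
  rw [Fin.lt_def, ipos_val]
  simp only [Fin.coe_castSucc]
  omega

lemma ipos_lt_of (i : ℕ) (x : Fin n) (h : n + 1 ≤ (x:ℕ) + i) (h2 : i ≤ n + 1) :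
    ipos n i < x.succ := by
  rw [Fin.lt_def, ipos_val]
  simp only [Fin.val_succ]
  omega

lemma succ_pred_eq (x : Fin n) (h : ((x.succ : Fin (n+1)):ℕ) - 1 < n) :
    (⟨((x.succ : Fin (n+1)):ℕ) - 1, h⟩ : Fin n) = x := by
  ext; simp

lemma castSucc_back_eq (a : Fin n) (h : ((a.castSucc : Fin (n+1)):ℕ) < n) :
    (⟨((a.castSucc : Fin (n+1)):ℕ), h⟩ : Fin n) = a := by
  ext; simp

set_option maxHeartbeats 1000000 in
lemma avoid_insert_iff (α : Perm (Fin n)) (i : ℕ) (h1 : 1 ≤ i) (h2 : i ≤ n + 1)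
    (hα : AvoidsSet α PP) :
    AvoidsSet (insertMax α i) PP ↔ Dec α i ∧ NoBad α i := by
  rw [avoids_pp_iff]
  constructor
  · rintro ⟨h312, h2431⟩
    constructor
    · -- Dec
      intro x y hx hxy
      by_contra hyx
      have hne : α x ≠ α y := fun h => (ne_of_lt hxy) (α.injective h)
      have hlt : α x < α y := lt_of_le_of_ne (not_lt.1 hyx) hne
      have hy : n + 1 ≤ (y:ℕ) + i := by
        have : (x:ℕ) < (y:ℕ) := hxy
        omega
      have hpx : ipos n i < x.succ := ipos_lt_of i x hx h2
      have hpy : ipos n i < y.succ := ipos_lt_of i y hy h2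
      refine h312 (contains312 _ (ipos n i) x.succ y.succ hpx ?_ ?_ ?_)
      · rw [Fin.lt_def]; simp only [Fin.val_succ]
        exact Nat.succ_lt_succ hxy
      · rw [ins_gt α i _ hpx, ins_gt α i _ hpy, Fin.castSucc_lt_castSucc_iff,
          succ_pred_eq, succ_pred_eq]
        exact hlt
      · rw [ins_gt α i _ hpy, ins_eq]
        exact Fin.castSucc_lt_last _
    · -- NoBad
      rintro a x y ha hx hxy ⟨hya, hax⟩
      have hy : n + 1 ≤ (y:ℕ) + i := by
        have : (x:ℕ) < (y:ℕ) := hxy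
        omega
      have hpa : a.castSucc < ipos n i := lt_ipos_of i a ha h1
      have hpx : ipos n i < x.succ := ipos_lt_of i x hx h2
      have hpy : ipos n i < y.succ := ipos_lt_of i y hy h2
      refine h2431 (contains2431 _ a.castSucc (ipos n i) x.succ y.succ hpa hpx ?_ ?_ ?_ ?_)
      · rw [Fin.lt_def]; simp only [Fin.val_succ]
        exact Nat.succ_lt_succ hxy
      · rw [ins_gt α i _ hpy, ins_lt α i _ hpa, Fin.castSucc_lt_castSucc_iff,
          succ_pred_eq, castSucc_back_eq]
        exact hya
      · rw [ins_gt α i _ hpx, ins_lt α i _ hpa, Fin.castSucc_lt_castSucc_iff,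
          succ_pred_eq, castSucc_back_eq]
        exact hax
      · rw [ins_gt α i _ hpx, ins_eq]
        exact Fin.castSucc_lt_last _
  · rintro ⟨hdec, hnb⟩
    have hαp := (avoids_pp_iff α).1 hα
    constructor
    · -- no 312 in the insertion
      rintro ⟨f, hmono, hiff⟩
      by_cases hc : ∀ t, f t ≠ ipos n i
      · exact hαp.1 (transfer perm312 α i f hmono hiff hc)
      push_neg at hc
      obtain ⟨t0, ht0⟩ := hc
      have hmax : ∀ s, s ≠ t0 → perm312 s < perm312 t0 := by
        intro s hs
        rw [hiff, ht0, ins_eq]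
        have hsne : f s ≠ ipos n i := by
          rw [← ht0]; exact fun h => hs (hmono.injective h)
        rcases Fin.lt_or_lt_of_ne hsne with h | h
        · rw [ins_lt α i _ h]; exact Fin.castSucc_lt_last _
        · rw [ins_gt α i _ h]; exact Fin.castSucc_lt_last _
      have ht00 : t0 = 0 := by
        rcases (em (t0 = 1)) with h | h
        · subst h; exact absurd (hmax 0 (by decide)) (by decide)
        rcases (em (t0 = 2)) with h' | h'
        · subst h'; exact absurd (hmax 0 (by decide)) (by decide)
        omega
      subst ht00
      have hp1 : ipos n i < f 1 := ht0 ▸ hmono (show (0:Fin 3) < 1 by decide)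
      have hp2 : ipos n i < f 2 := hp1.trans (hmono (show (1:Fin 3) < 2 by decide))
      have hf12 : (f 1 : ℕ) < (f 2 : ℕ) := hmono (show (1:Fin 3) < 2 by decide)
      have hp1' : ((ipos n i : Fin (n+1)):ℕ) < (f 1 : ℕ) := hp1
      have hp2' : ((ipos n i : Fin (n+1)):ℕ) < (f 2 : ℕ) := hp2
      have hpv := ipos_val (n := n) i
      have key := (hiff 1 2).1 (by decide)
      rw [ins_gt α i _ hp1, ins_gt α i _ hp2, Fin.castSucc_lt_castSucc_iff] at key
      have hrev := hdec ⟨(f 1 : ℕ) - 1, by omega⟩ ⟨(f 2 : ℕ) - 1, by omega⟩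
        (by show n + 1 ≤ (f 1 : ℕ) - 1 + i; omega) (Fin.mk_lt_mk.2 (by omega))
      exact absurd key (not_lt.2 (le_of_lt hrev))
    · -- no 2431 in the insertion
      rintro ⟨f, hmono, hiff⟩
      by_cases hc : ∀ t, f t ≠ ipos n i
      · exact hαp.2 (transfer perm2431 α i f hmono hiff hc)
      push_neg at hc
      obtain ⟨t0, ht0⟩ := hc
      have hmax : ∀ s, s ≠ t0 → perm2431 s < perm2431 t0 := by
        intro s hs
        rw [hiff, ht0, ins_eq]
        have hsne : f s ≠ ipos n i := by
          rw [← ht0]; exact fun h => hs (hmono.injective h)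
        rcases Fin.lt_or_lt_of_ne hsne with h | h
        · rw [ins_lt α i _ h]; exact Fin.castSucc_lt_last _
        · rw [ins_gt α i _ h]; exact Fin.castSucc_lt_last _
      have ht00 : t0 = 1 := by
        rcases (em (t0 = 0)) with h | h
        · subst h; exact absurd (hmax 1 (by decide)) (by decide)
        rcases (em (t0 = 2)) with h' | h'
        · subst h'; exact absurd (hmax 1 (by decide)) (by decide)
        rcases (em (t0 = 3)) with h'' | h''
        · subst h''; exact absurd (hmax 1 (by decide)) (by decide)
        omega
      subst ht00
      have hf01 : f 0 < ipos n i := ht0 ▸ hmono (show (0:Fin 4) < 1 by decide)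
      have hp2 : ipos n i < f 2 := ht0 ▸ hmono (show (1:Fin 4) < 2 by decide)
      have hp3 : ipos n i < f 3 := hp2.trans (hmono (show (2:Fin 4) < 3 by decide))
      have hf23 : (f 2 : ℕ) < (f 3 : ℕ) := hmono (show (2:Fin 4) < 3 by decide)
      have hf01' : (f 0 : ℕ) < ((ipos n i : Fin (n+1)):ℕ) := hf01
      have hp2' : ((ipos n i : Fin (n+1)):ℕ) < (f 2 : ℕ) := hp2
      have hp3' : ((ipos n i : Fin (n+1)):ℕ) < (f 3 : ℕ) := hp3
      have hpv := ipos_val (n := n) i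
      have key1 := (hiff 3 0).1 (by decide)
      have key2 := (hiff 0 2).1 (by decide)
      rw [ins_gt α i _ hp3, ins_lt α i _ hf01, Fin.castSucc_lt_castSucc_iff] at key1
      rw [ins_gt α i _ hp2, ins_lt α i _ hf01, Fin.castSucc_lt_castSucc_iff] at key2
      exact hnb ⟨(f 0 : ℕ), by omega⟩ ⟨(f 2 : ℕ) - 1, by omega⟩ ⟨(f 3 : ℕ) - 1, by omega⟩
        (by show (f 0 : ℕ) + i ≤ n; omega) (by show n + 1 ≤ (f 2 : ℕ) - 1 + i; omega)
        (Fin.mk_lt_mk.2 (by omega)) ⟨key1, key2⟩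

lemma active_iff (α : Perm (Fin n)) (hα : AvoidsSet α PP) (j : ℕ) :
    ActiveSite PP α j ↔ 1 ≤ j ∧ j ≤ n + 1 ∧ Dec α j ∧ NoBad α j := by
  constructor
  · rintro ⟨hj1, hj2, hav⟩
    exact ⟨hj1, hj2, (avoid_insert_iff α j hj1 hj2 hα).1 hav⟩
  · rintro ⟨hj1, hj2, hd, hnb⟩
    exact ⟨hj1, hj2, (avoid_insert_iff α j hj1 hj2 hα).2 ⟨hd, hnb⟩⟩

end Aux
namespace Aux
variable {n : ℕ}

/-- case analysis for values of the insertion -/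
lemma ins_cases (α : Perm (Fin n)) (i : ℕ) (j : Fin (n+1)) :
    j = ipos n i ∨
    (∃ x : Fin n, (x:ℕ) = (j:ℕ) ∧ (j:ℕ) < ((ipos n i : Fin (n+1)):ℕ) ∧
      insertMax α i j = (α x).castSucc) ∨
    (∃ x : Fin n, (x:ℕ) + 1 = (j:ℕ) ∧ ((ipos n i : Fin (n+1)):ℕ) < (j:ℕ) ∧
      insertMax α i j = (α x).castSucc) := by
  rcases lt_trichotomy j (ipos n i) with h | h | h
  · have hv : (j:ℕ) < ((ipos n i : Fin (n+1)):ℕ) := h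
    exact Or.inr (Or.inl ⟨⟨(j:ℕ), by omega⟩, rfl, hv, ins_lt α i j h⟩)
  · exact Or.inl h
  · have hv : ((ipos n i : Fin (n+1)):ℕ) < (j:ℕ) := h
    refine Or.inr (Or.inr ⟨⟨(j:ℕ) - 1, by omega⟩, by simp; omega, hv, ins_gt α i j h⟩)

lemma ins_eq_last_iff (α : Perm (Fin n)) (i : ℕ) (j : Fin (n+1)) :
    insertMax α i j = Fin.last n ↔ j = ipos n i := by
  constructor
  · intro h
    rcases ins_cases α i j with h0 | ⟨x, _, _, hx⟩ | ⟨x, _, _, hx⟩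
    · exact h0
    · rw [hx] at h; exact absurd h (Fin.ne_last_of_lt (Fin.castSucc_lt_last _))
    · rw [hx] at h; exact absurd h (Fin.ne_last_of_lt (Fin.castSucc_lt_last _))
  · rintro rfl; exact ins_eq α i

lemma dec_mono (α : Perm (Fin n)) {j j' : ℕ} (h : j' ≤ j) (hd : Dec α j) : Dec α j' := by
  intro x y hx hxy
  exact hd x y (by omega) hxy

lemma nobad_mono (α : Perm (Fin n)) {j j' : ℕ} (h : j' ≤ j) (hd : Dec α j)
    (hnb : NoBad α j) : NoBad α j' := by
  rintro a x y ha hx hxy ⟨h1', h2'⟩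
  by_cases hcase : (a:ℕ) + j ≤ n
  · exact hnb a x y hcase (by omega) hxy ⟨h1', h2'⟩
  · have hax : a < x := by
      have : (x:ℕ) ≥ n + 1 - j' := by omega
      exact Fin.lt_def.2 (by omega)
    have := hd a x (by omega) hax
    exact absurd h2' (not_lt.2 (le_of_lt this))

lemma dec_one (α : Perm (Fin n)) : Dec α 1 := by
  intro x y hx hxy
  have h1 : (x:ℕ) < (y:ℕ) := hxy
  have h2 : (y:ℕ) < n := y.isLt
  omega

lemma nobad_one (α : Perm (Fin n)) : NoBad α 1 := by
  rintro a x y ha hx hxy ⟨_, _⟩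
  have h1 : (x:ℕ) < (y:ℕ) := hxy
  have h2 : (y:ℕ) < n := y.isLt
  omega

lemma active_one (α : Perm (Fin n)) (hα : AvoidsSet α PP) : ActiveSite PP α 1 :=
  (active_iff α hα 1).2 ⟨le_refl 1, by omega, dec_one α, nobad_one α⟩

lemma active_down (α : Perm (Fin n)) (hα : AvoidsSet α PP) {j j' : ℕ}
    (h1 : 1 ≤ j') (h2 : j' ≤ j) (ha : ActiveSite PP α j) : ActiveSite PP α j' := by
  rw [active_iff α hα] at ha ⊢
  obtain ⟨ha1, ha2, ha3, ha4⟩ := ha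
  exact ⟨h1, by omega, dec_mono α h2 ha3, nobad_mono α h2 ha3 ha4⟩

open Classical in
lemma active_Icc (α : Perm (Fin n)) (hα : AvoidsSet α PP) :
    {j : ℕ | ActiveSite PP α j} = Set.Icc 1 (numActive PP α) ∧ 1 ≤ numActive PP α := by
  set K := Nat.findGreatest (ActiveSite PP α) (n+1) with hKdef
  have hmem : ActiveSite PP α K := by
    have h1 : 1 ≤ K := Nat.le_findGreatest (by omega) (active_one α hα)
    exact Nat.findGreatest_spec (m := 1) (by omega) (active_one α hα)
  have hset : {j : ℕ | ActiveSite PP α j} = Set.Icc 1 K := by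
    ext j
    simp only [Set.mem_setOf_eq, Set.mem_Icc]
    constructor
    · intro hj
      refine ⟨hj.1, ?_⟩
      by_contra hlt
      exact Nat.findGreatest_is_greatest (by omega) hj.2.1 hj
    · rintro ⟨hj1, hj2⟩
      exact active_down α hα hj1 hj2 hmem
  have hK1 : 1 ≤ K := Nat.le_findGreatest (by omega) (active_one α hα)
  have hcard : numActive PP α = K := by
    rw [numActive, hset]
    rw [show Set.Icc 1 K = ↑(Finset.Icc 1 K) by simp]
    rw [Set.ncard_coe_finset, Nat.card_Icc]
    omega
  rw [hcard, hset]
  exact ⟨rfl, hK1⟩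

lemma numActive_eq_of (α : Perm (Fin n)) (hα : AvoidsSet α PP) (K : ℕ)
    (hact : ActiveSite PP α K) (hnot : ¬ ActiveSite PP α (K+1)) :
    numActive PP α = K := by
  obtain ⟨hset, h1⟩ := active_Icc α hα
  have hK : K ∈ Set.Icc 1 (numActive PP α) := hset ▸ hact
  have hK1 : K + 1 ∉ Set.Icc 1 (numActive PP α) := by
    rw [← hset]; exact hnot
  simp only [Set.mem_Icc] at hK hK1
  omega

lemma active_of_numActive (α : Perm (Fin n)) (hα : AvoidsSet α PP) {k j : ℕ}
    (hk : numActive PP α = k) (h1 : 1 ≤ j) (h2 : j ≤ k) : ActiveSite PP α j := by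
  obtain ⟨hset, _⟩ := active_Icc α hα
  have : j ∈ {j : ℕ | ActiveSite PP α j} := by
    rw [hset, hk]; exact Set.mem_Icc.2 ⟨h1, h2⟩
  exact this

lemma notactive_succ_of_numActive (α : Perm (Fin n)) (hα : AvoidsSet α PP) {k : ℕ}
    (hk : numActive PP α = k) : ¬ ActiveSite PP α (k+1) := by
  obtain ⟨hset, _⟩ := active_Icc α hα
  intro h
  have h2 : k + 1 ∈ {j : ℕ | ActiveSite PP α j} := h
  rw [hset, hk] at h2
  simp at h2

end Aux
namespace Aux
variable {n : ℕ}

lemma dec_ins_succ (α : Perm (Fin n)) (i : ℕ) (h1 : 1 ≤ i) (h2 : i ≤ n + 1)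
    (hd : Dec α i) : Dec (insertMax α i) (i+1) := by
  have hpv : ((ipos n i : Fin (n+1)) : ℕ) = n - (i-1) := ipos_val i
  intro x y hx hxy
  have hx' : n + 1 ≤ (x:ℕ) + i + 1 := by omega
  have hxy' : (x:ℕ) < (y:ℕ) := hxy
  rcases ins_cases α i y with hy0 | ⟨y', hy1, hy2, hy3⟩ | ⟨y', hy1, hy2, hy3⟩
  · -- y = ipos : impossible since x < y and x ≥ pos
    have : (y:ℕ) = n - (i-1) := by rw [hy0, hpv]
    omega
  · omega
  · rcases ins_cases α i x with hx0 | ⟨x', hx1, hx2, hx3⟩ | ⟨x', hx1, hx2, hx3⟩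
    · rw [hy3, hx0, ins_eq]
      exact Fin.castSucc_lt_last _
    · omega
    · rw [hy3, hx3, Fin.castSucc_lt_castSucc_iff]
      exact hd x' y' (by omega) (by rw [Fin.lt_def]; omega)

lemma nobad_ins (α : Perm (Fin n)) (i : ℕ) (h1 : 1 ≤ i) (h2 : i ≤ n + 1)
    (hnb : NoBad α i) : NoBad (insertMax α i) i := by
  have hpv : ((ipos n i : Fin (n+1)) : ℕ) = n - (i-1) := ipos_val i
  rintro a x y ha hx hxy ⟨hb1, hb2⟩
  have hxy' : (x:ℕ) < (y:ℕ) := hxy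
  rcases ins_cases α i a with ha0 | ⟨a', ha1, ha2, ha3⟩ | ⟨a', ha1, ha2, ha3⟩
  · rw [ha0, ins_eq] at hb2
    exact absurd hb2 (not_lt.2 (Fin.le_last _))
  · rcases ins_cases α i x with hx0 | ⟨x', hx1, hx2, hx3⟩ | ⟨x', hx1, hx2, hx3⟩
    · have : (x:ℕ) = n - (i-1) := by rw [hx0, hpv]
      omega
    · omega
    · rcases ins_cases α i y with hy0 | ⟨y', hy1, hy2, hy3⟩ | ⟨y', hy1, hy2, hy3⟩
      · have : (y:ℕ) = n - (i-1) := by rw [hy0, hpv]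
        omega
      · omega
      · rw [ha3, hy3, Fin.castSucc_lt_castSucc_iff] at hb1
        rw [ha3, hx3, Fin.castSucc_lt_castSucc_iff] at hb2
        exact hnb a' x' y' (by omega) (by omega) (by rw [Fin.lt_def]; omega) ⟨hb1, hb2⟩
  · omega

lemma nobad_ins_succ_of_cc (α : Perm (Fin n)) (i : ℕ) (h1 : 1 ≤ i) (h2 : i ≤ n + 1)
    (hcc : Cc α i) : NoBad (insertMax α i) (i+1) := by
  have hpv : ((ipos n i : Fin (n+1)) : ℕ) = n - (i-1) := ipos_val i
  rintro a x y ha hx hxy ⟨hb1, hb2⟩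
  have hxy' : (x:ℕ) < (y:ℕ) := hxy
  rcases ins_cases α i a with ha0 | ⟨a', ha1, ha2, ha3⟩ | ⟨a', ha1, ha2, ha3⟩
  · have : (a:ℕ) = n - (i-1) := by rw [ha0, hpv]
    omega
  · rcases ins_cases α i y with hy0 | ⟨y', hy1, hy2, hy3⟩ | ⟨y', hy1, hy2, hy3⟩
    · have : (y:ℕ) = n - (i-1) := by rw [hy0, hpv]
      omega
    · omega
    · rw [ha3, hy3, Fin.castSucc_lt_castSucc_iff] at hb1
      have := hcc a' y' (by omega) (by omega)
      omega
  · omega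

lemma cc_of_nobad_ins_succ (α : Perm (Fin n)) (i : ℕ) (h1 : 1 ≤ i) (h2 : i ≤ n + 1)
    (hnb : NoBad (insertMax α i) (i+1)) : Cc α i := by
  have hpv : ((ipos n i : Fin (n+1)) : ℕ) = n - (i-1) := ipos_val i
  intro a y ha hy
  by_contra hlt
  have hay : (a:ℕ) < (y:ℕ) := by omega
  have hne : α a ≠ α y := fun h => (Fin.lt_def.2 hay).ne (α.injective h)
  have hya : α y < α a := lt_of_le_of_ne (not_lt.1 hlt) (fun h => hne h.symm)
  have hca : a.castSucc < ipos n i := lt_ipos_of i a ha h1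
  have hcy : ipos n i < y.succ := ipos_lt_of i y hy h2
  refine hnb a.castSucc (ipos n i) y.succ ?_ ?_ ?_ ⟨?_, ?_⟩
  · simp only [Fin.coe_castSucc]; omega
  · rw [hpv]; omega
  · exact hcy
  · rw [ins_gt α i _ hcy, ins_lt α i _ hca, Fin.castSucc_lt_castSucc_iff,
      succ_pred_eq, castSucc_back_eq]
    exact hya
  · rw [ins_lt α i _ hca, ins_eq]
    exact Fin.castSucc_lt_last _

lemma not_dec_ins_two (α : Perm (Fin n)) (i : ℕ) (h1 : 1 ≤ i) (hin : i ≤ n) :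
    ¬ Dec (insertMax α i) (i+2) := by
  have hpv : ((ipos n i : Fin (n+1)) : ℕ) = n - (i-1) := ipos_val i
  intro hd
  have hx : (⟨n - i, by omega⟩ : Fin (n+1)) < ipos n i := by
    rw [Fin.lt_def, hpv]; simp; omega
  have := hd ⟨n - i, by omega⟩ (ipos n i) (by simp; omega) hx
  rw [ins_eq, ins_lt α i _ hx] at this
  exact absurd this (not_lt.2 (Fin.le_last _))

lemma maxin231_ins_iff (α : Perm (Fin n)) (i : ℕ) (h1 : 1 ≤ i) (h2 : i ≤ n + 1) :
    MaxIn231 (insertMax α i) ↔ ¬ Cc α i := by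
  have hpv : ((ipos n i : Fin (n+1)) : ℕ) = n - (i-1) := ipos_val i
  constructor
  · rintro ⟨a, b, c, hab, hbc, hmax, hv1, hv2⟩ hcc
    have hb : b = ipos n i := by
      rw [← ins_eq_last_iff α i]
      have hle := hmax (ipos n i)
      rw [ins_eq] at hle
      exact le_antisymm (Fin.le_last _) hle
    subst hb
    have hab' : (a:ℕ) < ((ipos n i : Fin (n+1)):ℕ) := hab
    have hbc' : ((ipos n i : Fin (n+1)):ℕ) < (c:ℕ) := hbc
    rcases ins_cases α i a with ha0 | ⟨a', ha1, ha2, ha3⟩ | ⟨a', ha1, ha2, ha3⟩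
    · rw [ha0] at hab; exact absurd hab (lt_irrefl _)
    · rcases ins_cases α i c with hc0 | ⟨c', hc1, hc2, hc3⟩ | ⟨c', hc1, hc2, hc3⟩
      · rw [hc0] at hbc; exact absurd hbc (lt_irrefl _)
      · omega
      · rw [ha3, hc3, Fin.castSucc_lt_castSucc_iff] at hv2
        have := hcc a' c' (by omega) (by omega)
        omega
    · omega
  · intro hncc
    simp only [Cc, not_forall] at hncc
    obtain ⟨a', y', ha, hy, hlt⟩ := hncc
    have hay : (a':ℕ) < (y':ℕ) := by omega
    have hne : α a' ≠ α y' := fun h => (Fin.lt_def.2 hay).ne (α.injective h)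
    have hya : α y' < α a' := lt_of_le_of_ne (not_lt.1 hlt) (fun h => hne h.symm)
    have hca : a'.castSucc < ipos n i := lt_ipos_of i a' ha h1
    have hcy : ipos n i < y'.succ := ipos_lt_of i y' hy h2
    refine ⟨a'.castSucc, ipos n i, y'.succ, hca, hcy, ?_, ?_, ?_⟩
    · intro t
      rw [ins_eq]
      exact Fin.le_last _
    · rw [ins_lt α i _ hca, ins_eq]
      exact Fin.castSucc_lt_last _
    · rw [ins_gt α i _ hcy, ins_lt α i _ hca, Fin.castSucc_lt_castSucc_iff,
        succ_pred_eq, castSucc_back_eq]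
      exact hya

lemma cc_one' (α : Perm (Fin n)) : Cc α 1 := by
  intro a y _ hy
  have := y.isLt
  omega

lemma not_cc_mid (α : Perm (Fin n)) (i : ℕ) (h2 : 2 ≤ i) (hin : i ≤ n)
    (hd : Dec α (i+1)) : ¬ Cc α i := by
  intro hcc
  have ha : n - i < n := by omega
  have hy : n - i + 1 < n := by omega
  have hlt : (⟨n - i, ha⟩ : Fin n) < ⟨n - i + 1, hy⟩ := by rw [Fin.lt_def]; simp
  have hD := hd ⟨n - i, ha⟩ ⟨n - i + 1, hy⟩ (by simp; omega) hlt
  have hC := hcc ⟨n - i, ha⟩ ⟨n - i + 1, hy⟩ (by simp; omega) (by simp; omega)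
  exact absurd hC (not_lt.2 (le_of_lt hD))

lemma suffix_dec (α : Perm (Fin n)) (h312 : ¬ Contains perm312 α) {m x y : Fin n}
    (hm : ∀ t, α t ≤ α m) (hmx : m < x) (hxy : x < y) : α y < α x := by
  by_contra h
  have hne : α x ≠ α y := fun he => (ne_of_lt hxy) (α.injective he)
  have hxy' : α x < α y := lt_of_le_of_ne (not_lt.1 h) hne
  have hym : α y < α m := lt_of_le_of_ne (hm y) (by
    intro he
    have : y = m := α.injective he
    subst this
    exact absurd (hmx.trans hxy) (lt_irrefl _))
  exact h312 (contains312 α m x y hmx hxy hxy' hym)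

lemma d0_split (α : Perm (Fin n)) (hd0 : ¬ MaxIn231 α) {m u v : Fin n}
    (hm : ∀ t, α t ≤ α m) (hum : u < m) (hmv : m < v) : α u < α v := by
  by_contra h
  have hne : α u ≠ α v := fun he => (ne_of_lt (hum.trans hmv)) (α.injective he)
  have hvu : α v < α u := lt_of_le_of_ne (not_lt.1 h) (fun he => hne he.symm)
  have hum' : α u < α m := lt_of_le_of_ne (hm u) (fun he => (ne_of_lt hum) (α.injective he))
  exact hd0 ⟨u, m, v, hum, hmv, hm, hum', hvu⟩

lemma cc_last_of_d0 (α : Perm (Fin n)) (hα : AvoidsSet α PP) (k : ℕ)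
    (hact : ActiveSite PP α k) (hnot : ¬ ActiveSite PP α (k+1))
    (hd0 : ¬ MaxIn231 α) : Cc α k := by
  intro a y ha hy
  have hn : 0 < n := a.pos
  set m : Fin n := α.symm ⟨n-1, by omega⟩ with hmdef
  have hm : ∀ t, α t ≤ α m := by
    intro t
    rw [hmdef, Equiv.apply_symm_apply, Fin.le_def]
    have := (α t).isLt
    simp
    omega
  have h312 := ((avoids_pp_iff α).1 hα).1
  have hDk : Dec α k := ((active_iff α hα k).1 hact).2.2.1
  have hk1 : 1 ≤ k := ((active_iff α hα k).1 hact).1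
  have hkn : k ≤ n := by omega
  have hm_ge : n + 1 ≤ (m:ℕ) + k := by
    by_contra hlt
    apply hnot
    rw [active_iff α hα]
    have hxge : ∀ x : Fin n, n + 1 ≤ (x:ℕ) + (k+1) → m ≤ x := by
      intro x hx
      rw [Fin.le_def]
      omega
    refine ⟨by omega, by omega, ?_, ?_⟩
    · intro x y' hx hxy'
      rcases eq_or_lt_of_le (hxge x hx) with he | hlt'
      · have : α y' < α m := lt_of_le_of_ne (hm y') (by
          intro hee
          have : y' = m := α.injective hee
          subst this
          rw [← he] at hxy'
          exact absurd hxy' (lt_irrefl _))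
        rw [← he]
        exact this
      · exact suffix_dec α h312 hm hlt' hxy'
    · rintro a' x y' ha' hx hxy' ⟨hb1, hb2⟩
      have hmx : m ≤ x := hxge x hx
      have hmy : m < y' := lt_of_le_of_lt hmx hxy'
      rcases lt_trichotomy a' m with ham | ham | ham
      · have := d0_split α hd0 hm ham hmy
        omega
      · rw [ham] at hb2
        exact absurd hb2 (not_lt.2 (hm x))
      · have hax : a' < x := by rw [Fin.lt_def]; omega
        have := suffix_dec α h312 hm ham hax
        omega
  have ham : a < m := by rw [Fin.lt_def]; omega
  rcases lt_trichotomy y m with hym | hym | hym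
  · have h' := hDk y m (by omega) hym
    exact absurd h' (not_lt.2 (hm y))
  · rw [hym]
    exact lt_of_le_of_ne (hm a) (fun he => (ne_of_lt ham) (α.injective he))
  · exact d0_split α hd0 hm ham hym

lemma not_cc_last_of_d1 (α : Perm (Fin n)) (hα : AvoidsSet α PP) (k : ℕ) (hk2 : 2 ≤ k)
    (hact : ActiveSite PP α k) (hd1 : MaxIn231 α) : ¬ Cc α k := by
  intro hcc
  obtain ⟨a, b, c, hab, hbc, hmaxb, hv1, hv2⟩ := hd1
  have hDk : Dec α k := ((active_iff α hα k).1 hact).2.2.1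
  have hkn1 : k ≤ n + 1 := ((active_iff α hα k).1 hact).2.1
  have hn : 0 < n := a.pos
  have hn2 : 2 ≤ n := by
    have h1 : (a:ℕ) < (b:ℕ) := hab
    have h2 : (b:ℕ) < (c:ℕ) := hbc
    have := c.isLt
    omega
  by_cases hb : (b:ℕ) + k ≤ n
  · have hy0 : n + 1 - k < n := by omega
    have := hcc b ⟨n + 1 - k, hy0⟩ hb (by simp; omega)
    exact absurd this (not_lt.2 (hmaxb _))
  · by_cases hac : (a:ℕ) + k ≤ n
    · have hcge : n + 1 ≤ (c:ℕ) + k := by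
        have : (b:ℕ) < (c:ℕ) := hbc
        omega
      have := hcc a c hac hcge
      omega
    · have := hDk a b (by omega) hab
      omega

lemma colorD2_eq_zero_iff (α : Perm (Fin n)) : colorD2 α = 0 ↔ ¬ MaxIn231 α := by
  by_cases h : MaxIn231 α <;> simp [colorD2, h]

lemma colorD2_eq_one_iff (α : Perm (Fin n)) : colorD2 α = 1 ↔ MaxIn231 α := by
  by_cases h : MaxIn231 α <;> simp [colorD2, h]

end Aux

/-- For `P = {312, 2431}`, with the color `d(α) = 1` iff the largest
entry of `α` plays the role of `3` in an occurrence of `231` (`d(α) = 0` otherwise):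
every `α ∈ S_n(P)` has its first site active, and if `α ∈ S_n(P)` has exactly `k`
active sites and `1 ≤ i ≤ k`, then (a) `α^{↓i}` has `i + 1` active sites if `i = 1` or
(`i = k` and `d(α) = 0`), and `i` active sites otherwise; (b) `d(α^{↓i}) = 0` if
`i = 1` or (`i = k` and `d(α) = 0`), and `d(α^{↓i}) = 1` otherwise. Hence `P` is a
colored regular set of forbidden patterns with colors `{0, 1}`. -/
theorem cRegular_312_2431 (P : PatternSet)
    (hP : P = {⟨3, perm312⟩, ⟨4, perm2431⟩}) :
    (∀ (n : ℕ) (α : Equiv.Perm (Fin n)), AvoidsSet α P → ActiveSite P α 1) ∧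
    (∀ (n : ℕ) (α : Equiv.Perm (Fin n)) (k i : ℕ), AvoidsSet α P →
      numActive P α = k → 1 ≤ i → i ≤ k →
      (numActive P (insertMax α i) =
        if i = 1 ∨ (i = k ∧ colorD2 α = 0) then i + 1 else i) ∧
      (colorD2 (insertMax α i) =
        if i = 1 ∨ (i = k ∧ colorD2 α = 0) then 0 else 1)) := by
  have hPP : P = Aux.PP := hP
  subst hPP
  constructor
  · intro n α hα
    exact Aux.active_one α hα
  · intro n α k i hα hk hi1 hik
    have hacti : ActiveSite Aux.PP α i := Aux.active_of_numActive α hα hk hi1 hik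
    have hnot : ¬ ActiveSite Aux.PP α (k+1) := Aux.notactive_succ_of_numActive α hα hk
    have hβ : AvoidsSet (insertMax α i) Aux.PP := hacti.2.2
    have hi_n : i ≤ n + 1 := hacti.2.1
    have hDi : Aux.Dec α i := ((Aux.active_iff α hα i).1 hacti).2.2.1
    have hNBi : Aux.NoBad α i := ((Aux.active_iff α hα i).1 hacti).2.2.2
    have hcc_iff : Aux.Cc α i ↔ (i = 1 ∨ (i = k ∧ colorD2 α = 0)) := by
      constructor
      · intro hcc
        by_cases hi1' : i = 1
        · exact Or.inl hi1'
        · right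
          have h2i : 2 ≤ i := by omega
          have hik' : i = k := by
            by_contra hne
            have hilt : i + 1 ≤ k := by omega
            have hact1 : ActiveSite Aux.PP α (i+1) :=
              Aux.active_of_numActive α hα hk (by omega) hilt
            have hD1 : Aux.Dec α (i+1) := ((Aux.active_iff α hα (i+1)).1 hact1).2.2.1
            have hin : i ≤ n := by have := hact1.2.1; omega
            exact Aux.not_cc_mid α i h2i hin hD1 hcc
          refine ⟨hik', ?_⟩
          rw [Aux.colorD2_eq_zero_iff]
          intro hmax
          exact Aux.not_cc_last_of_d1 α hα k (by omega) (hik' ▸ hacti) hmax (hik' ▸ hcc)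
      · rintro (h | ⟨hik', hc0⟩)
        · subst h; exact Aux.cc_one' α
        · subst hik'
          exact Aux.cc_last_of_d0 α hα i hacti hnot ((Aux.colorD2_eq_zero_iff α).1 hc0)
    by_cases hor : i = 1 ∨ (i = k ∧ colorD2 α = 0)
    · rw [if_pos hor, if_pos hor]
      have hcc : Aux.Cc α i := hcc_iff.2 hor
      constructor
      · apply Aux.numActive_eq_of _ hβ
        · rw [Aux.active_iff _ hβ]
          exact ⟨by omega, by omega, Aux.dec_ins_succ α i hi1 hi_n hDi,
            Aux.nobad_ins_succ_of_cc α i hi1 hi_n hcc⟩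
        · intro hact2
          have hin : i ≤ n := by have := hact2.2.1; omega
          exact Aux.not_dec_ins_two α i hi1 hin
            (((Aux.active_iff _ hβ (i+2)).1 hact2).2.2.1)
      · rw [Aux.colorD2_eq_zero_iff, Aux.maxin231_ins_iff α i hi1 hi_n]
        exact fun h => h hcc
    · rw [if_neg hor, if_neg hor]
      have hncc : ¬ Aux.Cc α i := fun h => hor (hcc_iff.1 h)
      constructor
      · apply Aux.numActive_eq_of _ hβ
        · rw [Aux.active_iff _ hβ]
          exact ⟨hi1, by omega, Aux.dec_mono _ (by omega) (Aux.dec_ins_succ α i hi1 hi_n hDi),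
            Aux.nobad_ins α i hi1 hi_n hNBi⟩
        · intro hact1
          exact hncc (Aux.cc_of_nobad_ins_succ α i hi1 hi_n
            (((Aux.active_iff _ hβ (i+1)).1 hact1).2.2.2))
      · rw [Aux.colorD2_eq_one_iff, Aux.maxin231_ins_iff α i hi1 hi_n]
        exact hncc
end

section
/- Let P be a set of forbidden patterns, let α∈S_n(P) be such that α^{↓1}∈S_{n+1}(P), and suppose that (α^{↓1})^{↓2} contains some pattern belonging to P. Then P contains a pattern τ of some length k≥2 of the form τ=τ(1)τ(2)...τ(k−2) k (k−1), i.e., a pattern whose largest entry k is in the next-to-last position and whose entry k−1 is in the last position. -/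
open Equiv

section Helpers
open Equiv

lemma my_revmk {n : ℕ} (hh : n < n + 1) : (⟨n, hh⟩ : Fin (n+1)).rev = 0 := by
  simp [Fin.rev, Fin.ext_iff]

lemma my_revmk2 {n : ℕ} (hh : n < n + 2) : (⟨n, hh⟩ : Fin (n+2)).rev = 1 := by
  simp [Fin.rev, Fin.ext_iff]

lemma my_aux1 {n} (α : Perm (Fin n)) (j : Fin n) :
    insertMax α 1 (Fin.castSucc j) = Fin.castSucc (α j) := by
  simp [insertMax, my_revmk, Fin.cycleRange_zero, Fin.rev_rev]

lemma my_aux2 {n} (α : Perm (Fin n)) :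
    insertMax α 1 (Fin.last n) = Fin.last n := by
  simp [insertMax, my_revmk, Fin.cycleRange_zero, Fin.rev_rev]

lemma my_baux1 {n} (γ : Perm (Fin (n+1))) (j : Fin (n+1)) (hj : (j : ℕ) < n) :
    insertMax γ 2 (Fin.castSucc j) = Fin.castSucc (γ j) := by
  have h1 : Fin.cycleRange (1 : Fin (n+2)) (Fin.rev (Fin.castSucc j)) = Fin.rev (Fin.castSucc j) := by
    apply Fin.cycleRange_of_gt
    simp [Fin.lt_iff_val_lt_val, Fin.rev, Fin.val_one]
    omega
  simp [insertMax, my_revmk2, h1, Fin.rev_rev]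

lemma my_baux2 {n} (γ : Perm (Fin (n+1))) (hh : n < n + 2) :
    insertMax γ 2 ⟨n, hh⟩ = Fin.last (n+1) := by
  simp [insertMax, my_revmk2, Fin.cycleRange_self, Fin.rev_zero]

lemma my_baux3 {n} (γ : Perm (Fin (n+1))) :
    insertMax γ 2 (Fin.last (n+1)) = Fin.castSucc (γ (Fin.last n)) := by
  have h1 : Fin.cycleRange (1 : Fin (n+2)) 0 = 1 := by
    have := Fin.cycleRange_of_lt (j := (1 : Fin (n+2))) (i := 0) (by simp [Fin.lt_iff_val_lt_val])
    simpa using this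
  have h2 : (Fin.rev (1 : Fin (n+2))) = Fin.castSucc (Fin.last n) := by
    simp [Fin.rev, Fin.ext_iff, Fin.val_one]
  simp [insertMax, my_revmk2, Fin.rev_last, h1, h2]

end Helpers

/-- Let `P` be a set of forbidden patterns, `α ∈ S_n(P)` with
`α^{↓1} ∈ S_{n+1}(P)`, and suppose `(α^{↓1})^{↓2}` contains some pattern of `P`. Then
`P` contains a pattern `τ` of some length `k ≥ 2` whose largest entry `k` is in the
next-to-last position and whose entry `k − 1` is in the last position. -/
theorem exists_special_pattern (P : PatternSet) {n : ℕ} (α : Equiv.Perm (Fin n))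
    (hα : AvoidsSet α P) (h1 : AvoidsSet (insertMax α 1) P)
    (h2 : ¬ AvoidsSet (insertMax (insertMax α 1) 2) P) :
    ∃ (m : ℕ) (τ : Equiv.Perm (Fin (m + 2))),
      (⟨m + 2, τ⟩ : (k : ℕ) × Equiv.Perm (Fin k)) ∈ P ∧
      (τ ⟨m, by omega⟩ : ℕ) = m + 1 ∧ (τ ⟨m + 1, by omega⟩ : ℕ) = m := by
  classical
  set γ := insertMax α 1 with hγdef
  set β := insertMax γ 2 with hβdef
  -- value facts about γ
  have hγ1 : ∀ (y : Fin (n+1)), (y : ℕ) < n → (γ y : ℕ) < n := by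
    intro y hy
    have e : y = Fin.castSucc ⟨(y : ℕ), hy⟩ := by ext; simp
    rw [hγdef, e, my_aux1]
    simp
  have hγ2 : ∀ (y : Fin (n+1)), (y : ℕ) = n → (γ y : ℕ) = n := by
    intro y hy
    have e : y = Fin.last n := by ext; simpa using hy
    rw [hγdef, e, my_aux2]
    simp
  -- value facts about β
  have hβ1 : ∀ (x : Fin (n+2)) (y : Fin (n+1)), (x : ℕ) < n → (x : ℕ) = (y : ℕ) →
      (β x : ℕ) = (γ y : ℕ) ∧ (β x : ℕ) < n := by
    intro x y hx hxy
    have hy : (y : ℕ) < n := by omega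
    have e : x = Fin.castSucc y := by ext; simpa using hxy
    rw [hβdef, e, my_baux1 γ y hy]
    exact ⟨by simp, by simpa using hγ1 y hy⟩
  have hβ2 : ∀ (x : Fin (n+2)), (x : ℕ) = n → (β x : ℕ) = n + 1 := by
    intro x hx
    have e : x = ⟨n, by omega⟩ := by ext; simpa using hx
    rw [hβdef, e, my_baux2 γ (by omega)]
    simp
  have hβ3 : ∀ (x : Fin (n+2)), (x : ℕ) = n + 1 → (β x : ℕ) = n := by
    intro x hx
    have e : x = Fin.last (n+1) := by ext; simpa using hx
    rw [hβdef, e, my_baux3 γ]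
    have := my_aux2 α
    rw [← hγdef] at this
    rw [this]
    simp
  -- extract the pattern
  simp only [AvoidsSet] at h2
  push_neg at h2
  obtain ⟨⟨k, σ⟩, hτP, f, hf, hiff⟩ := h2
  -- Step 1: f hits value n
  have hern : ∃ a, (f a : ℕ) = n := by
    by_contra hno
    push_neg at hno
    apply h1 ⟨k, σ⟩ hτP
    have hb : ∀ a, min (f a : ℕ) n < n + 1 := fun a => by omega
    refine ⟨fun a => ⟨min (f a : ℕ) n, hb a⟩, ?_, ?_⟩
    · intro a b hab
      have hlt := hf hab
      rw [Fin.lt_def] at hlt ⊢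
      simp only
      have h1a := hno a; have h1b := hno b
      have h2a := (f a).isLt; have h2b := (f b).isLt
      omega
    · intro a b
      rw [hiff a b, Fin.lt_def, Fin.lt_def]
      show (β (f a) : ℕ) < (β (f b) : ℕ) ↔
        ((γ ⟨min (f a : ℕ) n, hb a⟩ : Fin (n+1)) : ℕ) < ((γ ⟨min (f b : ℕ) n, hb b⟩ : Fin (n+1)) : ℕ)
      have pointe : ∀ c : Fin k, (β (f c) : ℕ) = (γ ⟨min (f c : ℕ) n, hb c⟩ : ℕ) := by
        intro c
        have h2c := (f c).isLt
        rcases lt_or_ge ((f c : ℕ)) n with h | h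
        · exact (hβ1 (f c) ⟨min (f c : ℕ) n, hb c⟩ h (by simp; omega)).1
        · have hfc : (f c : ℕ) = n + 1 := by have := hno c; omega
          rw [hβ3 (f c) hfc, hγ2 ⟨min (f c : ℕ) n, hb c⟩ (by simp; omega)]
      rw [pointe a, pointe b]
  -- Step 2: f hits value n+1
  have herl : ∃ a, (f a : ℕ) = n + 1 := by
    by_contra hno
    push_neg at hno
    apply h1 ⟨k, σ⟩ hτP
    have hb : ∀ a, (f a : ℕ) < n + 1 := by
      intro a; have := (f a).isLt; have := hno a; omega
    refine ⟨fun a => ⟨(f a : ℕ), hb a⟩, ?_, ?_⟩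
    · intro a b hab
      have hlt := hf hab
      rw [Fin.lt_def] at hlt ⊢
      simpa using hlt
    · intro a b
      rw [hiff a b, Fin.lt_def, Fin.lt_def]
      show (β (f a) : ℕ) < (β (f b) : ℕ) ↔
        ((γ ⟨(f a : ℕ), hb a⟩ : Fin (n+1)) : ℕ) < ((γ ⟨(f b : ℕ), hb b⟩ : Fin (n+1)) : ℕ)
      have case2 : ∀ c : Fin k,
          ((β (f c) : ℕ) = (γ ⟨(f c : ℕ), hb c⟩ : ℕ) ∧ (β (f c) : ℕ) < n) ∨
          ((β (f c) : ℕ) = n + 1 ∧ (γ ⟨(f c : ℕ), hb c⟩ : ℕ) = n) := by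
        intro c
        rcases lt_or_ge ((f c : ℕ)) n with h | h
        · exact Or.inl (hβ1 (f c) ⟨(f c : ℕ), hb c⟩ h (by simp))
        · have hfc : (f c : ℕ) = n := by have := hb c; omega
          exact Or.inr ⟨hβ2 (f c) hfc, hγ2 ⟨(f c : ℕ), hb c⟩ (by simpa using hfc)⟩
      rcases case2 a with ⟨e1, e2⟩ | ⟨e1, e2⟩ <;> rcases case2 b with ⟨e3, e4⟩ | ⟨e3, e4⟩ <;>
        constructor <;> intro h <;> omega
  obtain ⟨a₀, ha₀⟩ := hern
  obtain ⟨a₁, ha₁⟩ := herl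
  have hβa₀ : (β (f a₀) : ℕ) = n + 1 := hβ2 _ ha₀
  have hβa₁ : (β (f a₁) : ℕ) = n := hβ3 _ ha₁
  have hne : a₀ ≠ a₁ := by
    intro h; rw [h] at ha₀; omega
  -- k = m + 2
  rcases k with _ | _ | m
  · exact a₀.elim0
  · exact absurd (Subsingleton.elim (α := Fin 1) a₀ a₁) hne
  -- positions of a₀ and a₁
  have hlt01 : a₀ < a₁ := by
    rw [← hf.lt_iff_lt, Fin.lt_def]
    omega
  have ha₁pos : (a₁ : ℕ) = m + 1 := by
    have h1' : ¬ a₁ < (⟨m + 1, by omega⟩ : Fin (m + 2)) := by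
      intro hc
      have := hf hc
      rw [Fin.lt_def] at this
      have := (f ⟨m + 1, by omega⟩).isLt
      omega
    rw [Fin.lt_def] at h1'
    have hupp : (a₁ : ℕ) < m + 2 := a₁.isLt
    simp only at h1'
    omega
  have ha₀pos : (a₀ : ℕ) = m := by
    have hub : (a₀ : ℕ) < m + 1 := by
      have := hlt01
      rw [Fin.lt_def] at this
      omega
    have h1' : ¬ a₀ < (⟨m, by omega⟩ : Fin (m + 2)) := by
      intro hc
      have hc2 : (⟨m, by omega⟩ : Fin (m + 2)) < a₁ := by
        rw [Fin.lt_def]; simp [ha₁pos]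
      have e1 := hf hc
      have e2 := hf hc2
      rw [Fin.lt_def] at e1 e2
      omega
    rw [Fin.lt_def] at h1'
    simp only at h1'
    omega
  -- σ a₀ is the maximum
  have hmax : ∀ x, σ x ≤ σ a₀ := by
    intro x
    rcases eq_or_ne x a₀ with rfl | hx
    · exact le_refl _
    · apply le_of_lt
      rw [hiff, Fin.lt_def]
      have hfx : f x ≠ f a₀ := fun h => hx (hf.injective h)
      have hβne : (β (f x) : ℕ) ≠ (β (f a₀) : ℕ) := by
        intro h
        exact hfx (β.injective (Fin.ext h))
      have := (β (f x)).isLt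
      omega
  have hσa₀ : (σ a₀ : ℕ) = m + 1 := by
    have h1' := hmax (σ.symm (Fin.last (m + 1)))
    rw [Equiv.apply_symm_apply] at h1'
    have h2' := Fin.le_last (σ a₀)
    have := le_antisymm h2' h1'
    rw [this]; rfl
  -- σ a₁ is the second largest
  have hsecond : ∀ x, x ≠ a₀ → σ x ≤ σ a₁ := by
    intro x hx
    rcases eq_or_ne x a₁ with rfl | hx1
    · exact le_refl _
    · apply le_of_lt
      rw [hiff, Fin.lt_def, hβa₁]
      have hfx0 : (f x : ℕ) ≠ n := by
        intro h
        exact hx (hf.injective (Fin.ext (h.trans ha₀.symm)))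
      have hfx1 : (f x : ℕ) ≠ n + 1 := by
        intro h
        exact hx1 (hf.injective (Fin.ext (h.trans ha₁.symm)))
      have hfxlt : (f x : ℕ) < n := by have := (f x).isLt; omega
      exact (hβ1 (f x) ⟨(f x : ℕ), by omega⟩ hfxlt (by simp)).2
  have hσa₁ : (σ a₁ : ℕ) = m := by
    have hub : (σ a₁ : ℕ) < m + 1 := by
      have h1' : σ a₁ ≠ σ a₀ := fun h => hne (σ.injective h).symm
      have h2' := hmax a₁
      rw [le_iff_lt_or_eq] at h2'
      rcases h2' with h | h
      · rw [Fin.lt_def] at h; omega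
      · exact absurd h h1'
    have hlb : m ≤ (σ a₁ : ℕ) := by
      set y := σ.symm ⟨m, by omega⟩ with hy
      have hyval : (σ y : ℕ) = m := by rw [hy, Equiv.apply_symm_apply]
      rcases eq_or_ne y a₀ with h | h
      · rw [h] at hyval; omega
      · have := hsecond y h
        rw [Fin.le_def] at this
        omega
    omega
  refine ⟨m, σ, hτP, ?_, ?_⟩
  · have e : (⟨m, by omega⟩ : Fin (m + 2)) = a₀ := Fin.ext (by simpa using ha₀pos.symm)
    rw [e, hσa₀]
  · have e : (⟨m + 1, by omega⟩ : Fin (m + 2)) = a₁ := Fin.ext (by simpa using ha₁pos.symm)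
    rw [e, hσa₁]
end
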